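/- Strong Sperner's lemma for the triangle: in any Sperner labeling of a triangulated triangle, the number of small triangles exhibiting all three labels is odd. -/

import Mathlib

open scoped Classical

/-- The `i`-th vertex `e_i` of the standard simplex in `ℝ^N`. -/
noncomputable def vtx (N : ℕ) (i : Fin N) : Fin N → ℝ := fun j => if j = i then 1 else 0

/-- The face of the standard simplex supported on the index set `S`. -/
def simFace (N : ℕ) (S : Finset (Fin N)) : Set (Fin N → ℝ) :=
  {x ∈ stdSimplex ℝ (Fin N) | ∀ i ∉ S, x i = 0}

/-- A triangulation of the standard simplex `Δ = stdSimplex ℝ (Fin N)` (an `(N-1)`-simplex):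
a finite family of `N`-element affinely independent vertex sets whose convex hulls cover `Δ`
and meet face-to-face. -/
structure Triangulation (N : ℕ) where
  facets : Finset (Finset (Fin N → ℝ))
  card_eq : ∀ σ ∈ facets, σ.card = N
  indep : ∀ σ ∈ facets, AffineIndependent ℝ (fun v : {x // x ∈ σ} => (v : Fin N → ℝ))
  covers : (⋃ σ ∈ facets, convexHull ℝ (σ : Set (Fin N → ℝ))) = stdSimplex ℝ (Fin N)
  faceToFace : ∀ σ ∈ facets, ∀ σ' ∈ facets,
    convexHull ℝ (σ : Set (Fin N → ℝ)) ∩ convexHull ℝ (σ' : Set (Fin N → ℝ))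
      = convexHull ℝ ((σ ∩ σ' : Finset (Fin N → ℝ)) : Set (Fin N → ℝ))

/-- The vertex set of a triangulation. -/
noncomputable def Triangulation.vertices {N : ℕ} (T : Triangulation N) :
    Finset (Fin N → ℝ) :=
  T.facets.biUnion id

/-- A Sperner labeling: each vertex `v` receives a label `ℓ v` lying in the support of `v`,
i.e. a vertex lying in the face `conv{e_i : i ∈ S}` is labeled by an element of `S`
(in particular `e_i` is labeled `i`). -/
def IsSperner {N : ℕ} (T : Triangulation N) (ℓ : (Fin N → ℝ) → Fin N) : Prop :=
  ∀ v ∈ T.vertices, v (ℓ v) ≠ 0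

namespace S
open Finset

abbrev E := Fin 3 → ℝ

variable {T : Triangulation 3}

lemma hull_subset (hσ : σ ∈ T.facets) : convexHull ℝ (σ : Set E) ⊆ stdSimplex ℝ (Fin 3) := by
  intro x hx
  rw [← T.covers]
  exact Set.mem_biUnion hσ hx

lemma vertex_mem (hσ : σ ∈ T.facets) (hv : v ∈ σ) : v ∈ stdSimplex ℝ (Fin 3) :=
  hull_subset hσ (subset_convexHull ℝ _ hv)

lemma mem_Δ_iff {x : E} : x ∈ stdSimplex ℝ (Fin 3) ↔ (∀ i, 0 ≤ x i) ∧ x 0 + x 1 + x 2 = 1 := by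
  constructor
  · rintro ⟨h1, h2⟩
    refine ⟨h1, ?_⟩
    rw [Fin.sum_univ_three] at h2; linarith
  · rintro ⟨h1, h2⟩
    refine ⟨h1, ?_⟩
    rw [Fin.sum_univ_three]; linarith

lemma exists_triple (hσ : σ ∈ T.facets) :
    ∃ a b c : E, a ≠ b ∧ a ≠ c ∧ b ≠ c ∧ σ = {a, b, c} := by
  have := T.card_eq σ hσ
  exact Finset.card_eq_three.1 this

-- barycentric machinery
variable {a b c : E} {σ : Finset E}

/-- vertices of a facet are linearly independent (they lie on the hyperplane `∑ = 1`). -/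
lemma facet_linIndep (hσ : σ ∈ T.facets) (hab : a ≠ b) (hac : a ≠ c) (hbc : b ≠ c)
    (hτ : σ = {a, b, c}) {α β γ : ℝ} (h : α • a + β • b + γ • c = 0) :
    α = 0 ∧ β = 0 ∧ γ = 0 := by
  have ha : a ∈ σ := by rw [hτ]; simp
  have hb : b ∈ σ := by rw [hτ]; simp
  have hc : c ∈ σ := by rw [hτ]; simp
  have hsum : α + β + γ = 0 := by
    have ha' := (mem_Δ_iff.1 (vertex_mem hσ ha)).2
    have hb' := (mem_Δ_iff.1 (vertex_mem hσ hb)).2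
    have hc' := (mem_Δ_iff.1 (vertex_mem hσ hc)).2
    have h0 := congrFun h 0
    have h1 := congrFun h 1
    have h2 := congrFun h 2
    simp [Pi.add_apply, Pi.smul_apply] at h0 h1 h2
    linear_combination h0 + h1 + h2 - α*ha' - β*hb' - γ*hc'
  -- use affine independence
  have hAI := T.indep σ hσ
  set w : {x // x ∈ σ} → ℝ := fun v => if (v : E) = a then α else if (v : E) = b then β else γ with hw
  have hsplit : ∀ {M : Type} [AddCommMonoid M] (f : E → M),
      ∑ v ∈ σ.attach, f v = f a + f b + f c := by
    intro M _ f
    rw [Finset.sum_attach σ f, hτ]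
    rw [Finset.sum_insert (by simp [hab, hac]), Finset.sum_insert (by simp [hbc]),
      Finset.sum_singleton, add_assoc]
  have hw_sum : ∑ v ∈ Finset.univ, w v = 0 := by
    rw [Finset.univ_eq_attach]
    have : ∑ v ∈ σ.attach, w v = ∑ v ∈ σ.attach, (fun x : E => if x = a then α else if x = b then β else γ) (v : E) := by
      apply Finset.sum_congr rfl; intro v _; rfl
    rw [this, hsplit (fun x : E => if x = a then α else if x = b then β else γ)]
    simp [hab.symm, hac.symm, hbc.symm, hab, hac, hbc]
    linarith
  have hw_comb : ∑ v ∈ Finset.univ, w v • (v : E) = 0 := by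
    rw [Finset.univ_eq_attach]
    have : ∑ v ∈ σ.attach, w v • (v : E) = ∑ v ∈ σ.attach, (fun x : E => (if x = a then α else if x = b then β else γ) • x) (v : E) := by
      apply Finset.sum_congr rfl; intro v _; rfl
    rw [this, hsplit (fun x : E => (if x = a then α else if x = b then β else γ) • x)]
    simp only [if_pos rfl, if_neg (Ne.symm hab), if_neg (Ne.symm hac), if_neg (Ne.symm hbc)]
    simpa using h
  have := affineIndependent_iff.1 hAI Finset.univ w hw_sum hw_comb
  refine ⟨?_, ?_, ?_⟩
  · have := this ⟨a, ha⟩ (Finset.mem_univ _)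
    simpa [hw] using this
  · have := this ⟨b, hb⟩ (Finset.mem_univ _)
    simpa [hw, Ne.symm hab] using this
  · have := this ⟨c, hc⟩ (Finset.mem_univ _)
    simpa [hw, Ne.symm hac, Ne.symm hbc] using this

lemma bary_unique (hσ : σ ∈ T.facets) (hab : a ≠ b) (hac : a ≠ c) (hbc : b ≠ c)
    (hτ : σ = {a, b, c}) {α β γ α' β' γ' : ℝ}
    (h : α • a + β • b + γ • c = α' • a + β' • b + γ' • c) :
    α = α' ∧ β = β' ∧ γ = γ' := by
  have h0 : (α - α') • a + (β - β') • b + (γ - γ') • c = 0 := by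
    linear_combination (norm := module) h
  have := facet_linIndep hσ hab hac hbc hτ h0
  refine ⟨by linarith [this.1], by linarith [this.2.1], by linarith [this.2.2]⟩

/-- every point of ℝ³ is a linear combination of the vertices of a facet. -/
lemma bary_exists (hσ : σ ∈ T.facets) (hab : a ≠ b) (hac : a ≠ c) (hbc : b ≠ c)
    (hτ : σ = {a, b, c}) (x : E) :
    ∃ α β γ : ℝ, x = α • a + β • b + γ • c := by
  have hli : LinearIndependent ℝ ![a, b, c] := by
    rw [Fintype.linearIndependent_iff]
    intro g hg
    rw [Fin.sum_univ_three] at hg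
    simp only [Matrix.cons_val_zero, Matrix.cons_val_one, Matrix.head_cons] at hg
    have := facet_linIndep hσ hab hac hbc hτ hg
    intro i
    fin_cases i <;> simp [this.1, this.2.1, this.2.2]
  have hcard : Fintype.card (Fin 3) = Module.finrank ℝ E := by
    simp [Module.finrank_fintype_fun_eq_card]
  let B := basisOfLinearIndependentOfCardEqFinrank hli hcard
  have hB : ⇑B = ![a, b, c] := coe_basisOfLinearIndependentOfCardEqFinrank hli hcard
  refine ⟨B.repr x 0, B.repr x 1, B.repr x 2, ?_⟩
  have := B.sum_repr x
  rw [Fin.sum_univ_three] at this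
  rw [hB] at this
  simp only [Matrix.cons_val_zero, Matrix.cons_val_one, Matrix.head_cons] at this
  exact this.symm

-- hull membership
lemma mem_hull3 (hab : a ≠ b) (hac : a ≠ c) (hbc : b ≠ c) {x : E} :
    x ∈ convexHull ℝ (({a, b, c} : Finset E) : Set E) ↔
      ∃ α β γ : ℝ, 0 ≤ α ∧ 0 ≤ β ∧ 0 ≤ γ ∧ α + β + γ = 1 ∧ x = α • a + β • b + γ • c := by
  rw [Finset.convexHull_eq]
  constructor
  · rintro ⟨w, hw0, hw1, hcm⟩
    rw [Finset.centerMass_eq_of_sum_1 _ _ hw1] at hcm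
    rw [Finset.sum_insert (by simp [hab, hac]), Finset.sum_insert (by simp [hbc]),
      Finset.sum_singleton] at hcm hw1
    exact ⟨w a, w b, w c, hw0 a (by simp), hw0 b (by simp), hw0 c (by simp),
      by linarith, by rw [← hcm]; simp [add_assoc]⟩
  · rintro ⟨α, β, γ, h1, h2, h3, h4, rfl⟩
    refine ⟨fun y => if y = a then α else if y = b then β else γ, ?_, ?_, ?_⟩
    · intro y _; simp only []; split_ifs <;> assumption
    · rw [Finset.sum_insert (by simp [hab, hac]), Finset.sum_insert (by simp [hbc]),
        Finset.sum_singleton]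
      simp [hab.symm, hac.symm, hbc.symm, Ne.symm hab, Ne.symm hac, Ne.symm hbc]
      linarith
    · rw [Finset.centerMass_eq_of_sum_1]
      · rw [Finset.sum_insert (by simp [hab, hac]), Finset.sum_insert (by simp [hbc]),
          Finset.sum_singleton]
        simp only [id, if_pos rfl, if_neg (Ne.symm hab), if_neg (Ne.symm hac),
          if_neg (Ne.symm hbc), if_true, eq_self_iff_true]
        rw [add_assoc]
      · rw [Finset.sum_insert (by simp [hab, hac]), Finset.sum_insert (by simp [hbc]),
          Finset.sum_singleton]
        simp [if_neg (Ne.symm hab), if_neg (Ne.symm hac), if_neg (Ne.symm hbc)]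
        linarith

lemma mem_hull2 {u v : E} (huv : u ≠ v) {x : E} :
    x ∈ convexHull ℝ (({u, v} : Finset E) : Set E) ↔
      ∃ s t : ℝ, 0 ≤ s ∧ 0 ≤ t ∧ s + t = 1 ∧ x = s • u + t • v := by
  have : (({u, v} : Finset E) : Set E) = {u, v} := by simp
  rw [this, convexHull_pair]
  constructor
  · rintro ⟨s, t, hs, ht, hst, hx⟩
    exact ⟨s, t, hs, ht, hst, hx.symm⟩
  · rintro ⟨s, t, hs, ht, hst, hx⟩
    exact ⟨s, t, hs, ht, hst, hx.symm⟩

lemma hull_subset_coords {S : Finset E} (hab : a ≠ b) (hac : a ≠ c) (hbc : b ≠ c)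
    (hS : S ⊆ {a, b, c}) {x : E} (hx : x ∈ convexHull ℝ (S : Set E)) :
    ∃ α β γ : ℝ, 0 ≤ α ∧ 0 ≤ β ∧ 0 ≤ γ ∧ α + β + γ = 1 ∧ x = α • a + β • b + γ • c ∧
      (a ∉ S → α = 0) ∧ (b ∉ S → β = 0) ∧ (c ∉ S → γ = 0) := by
  rw [Finset.convexHull_eq] at hx
  obtain ⟨w, hw0, hw1, hcm⟩ := hx
  rw [Finset.centerMass_eq_of_sum_1 _ _ hw1] at hcm
  set w' : E → ℝ := fun y => if y ∈ S then w y else 0 with hw'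
  have hsum' : ∑ y ∈ ({a, b, c} : Finset E), w' y = 1 := by
    rw [← Finset.sum_subset hS (fun y _ hyS => by simp [w', hyS])]
    rw [← hw1]; exact Finset.sum_congr rfl fun y hy => by simp [w', hy]
  have hcomb' : ∑ y ∈ ({a, b, c} : Finset E), w' y • y = x := by
    rw [← Finset.sum_subset hS (fun y _ hyS => by simp [w', hyS])]
    rw [← hcm]; exact Finset.sum_congr rfl fun y hy => by simp [w', hy]
  rw [Finset.sum_insert (by simp [hab, hac]), Finset.sum_insert (by simp [hbc]),
    Finset.sum_singleton] at hsum' hcomb'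
  have hnn : ∀ y, 0 ≤ w' y := by
    intro y; by_cases hy : y ∈ S <;> simp [w', hy]
    exact hw0 y hy
  refine ⟨w' a, w' b, w' c, hnn a, hnn b, hnn c, by linarith, by rw [← hcomb']; rw [add_assoc],
    fun h => by simp [w', h], fun h => by simp [w', h], fun h => by simp [w', h]⟩

/-- A point of a facet hull with vanishing coordinate `i` lies in the hull of the
vertices with vanishing coordinate `i`. -/
lemma mem_hull_filter {σ : Finset E} {i : Fin 3} (hσΔ : ∀ v ∈ σ, 0 ≤ v i) {x : E}
    (hx : x ∈ convexHull ℝ (σ : Set E)) (hx2 : x i = 0) :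
    x ∈ convexHull ℝ ((σ.filter (fun v => v i = 0)) : Set E) := by
  classical
  rw [Finset.convexHull_eq] at hx ⊢
  obtain ⟨w, hw0, hw1, hcm⟩ := hx
  rw [Finset.centerMass_eq_of_sum_1 _ _ hw1] at hcm
  have hxi : ∑ y ∈ σ, w y * y i = 0 := by
    have := congrFun hcm i
    rw [Finset.sum_apply] at this
    simpa [hx2] using this
  have hzero : ∀ y ∈ σ, y ∉ σ.filter (fun v => v i = 0) → w y = 0 := by
    intro y hy hyf
    simp only [Finset.mem_filter, hy, true_and] at hyf
    have hterm : ∀ z ∈ σ, 0 ≤ w z * z i := fun z hz => mul_nonneg (hw0 z hz) (hσΔ z hz)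
    have := (Finset.sum_eq_zero_iff_of_nonneg hterm).1 hxi y hy
    have hyi : 0 < y i := lt_of_le_of_ne (hσΔ y hy) (Ne.symm hyf)
    by_contra hw
    have : 0 < w y * y i := mul_pos (lt_of_le_of_ne (hw0 y hy) (Ne.symm hw)) hyi
    linarith
  have hsub : σ.filter (fun v => v i = 0) ⊆ σ := Finset.filter_subset _ _
  refine ⟨w, fun y hy => hw0 y (hsub hy), ?_, ?_⟩
  · rw [Finset.sum_subset hsub (fun y hy hyf => hzero y hy hyf)]
    exact hw1
  · have h1 : ∑ y ∈ σ.filter (fun v => v i = 0), w y = 1 := by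
      rw [Finset.sum_subset hsub (fun y hy hyf => hzero y hy hyf)]; exact hw1
    rw [Finset.centerMass_eq_of_sum_1 _ _ h1]
    rw [Finset.sum_subset hsub (fun y hy hyf => by simp [hzero y hy hyf])]
    exact hcm

lemma third_vertex (hσ : σ ∈ T.facets) (hab : a ≠ b) (hsub : {a, b} ⊆ σ) :
    ∃ c, c ≠ a ∧ c ≠ b ∧ σ = {a, b, c} := by
  have hcard : σ.card = 3 := T.card_eq σ hσ
  have h2 : ({a, b} : Finset E).card = 2 := Finset.card_pair hab
  have : (σ \ {a, b}).card = 1 := by rw [Finset.card_sdiff_of_subset hsub, hcard, h2]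
  obtain ⟨c, hc⟩ := Finset.card_eq_one.1 this
  have hcmem : c ∈ σ \ ({a, b} : Finset E) := by rw [hc]; simp
  rw [Finset.mem_sdiff, Finset.mem_insert, Finset.mem_singleton] at hcmem
  push_neg at hcmem
  refine ⟨c, hcmem.2.1, hcmem.2.2, ?_⟩
  have := Finset.union_sdiff_of_subset hsub
  rw [hc] at this
  rw [← this]; ext x; simp

lemma inter_pair (hne : σ ≠ σ') {c' : E} (hab : a ≠ b)
    (hca : c ≠ a) (hcb : c ≠ b) (hc'a : c' ≠ a) (hc'b : c' ≠ b)
    (hτ : σ = {a, b, c}) (hτ' : σ' = {a, b, c'}) : σ ∩ σ' = {a, b} := by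
  have hcc' : c ≠ c' := by
    intro h; apply hne; rw [hτ, hτ', h]
  rw [hτ, hτ']; ext x; simp only [Finset.mem_inter, Finset.mem_insert, Finset.mem_singleton]
  constructor
  · rintro ⟨h1 | h1 | h1, h2 | h2 | h2⟩ <;> subst h1 <;> simp_all
  · rintro (h | h) <;> subst h <;> simp

/-- Key geometric lemma: if two distinct facets share the edge `{a,b}`, their third
vertices lie (strictly) on opposite sides. -/
lemma side_neg (hσ : σ ∈ T.facets) (hσ' : σ' ∈ T.facets) (hne : σ ≠ σ') {c' : E}
    (hab : a ≠ b) (hac : a ≠ c) (hbc : b ≠ c) (hτ : σ = {a, b, c})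
    (hc'a : c' ≠ a) (hc'b : c' ≠ b) (hτ' : σ' = {a, b, c'})
    {α' β' γ' : ℝ} (hsum : α' + β' + γ' = 1) (hrep : c' = α' • a + β' • b + γ' • c) :
    γ' < 0 := by
  have hinter : σ ∩ σ' = {a, b} :=
    inter_pair hne hab hac.symm hbc.symm hc'a hc'b hτ hτ'
  by_contra hγ
  push_neg at hγ
  rcases eq_or_lt_of_le hγ with hγ0 | hγpos
  · -- γ' = 0 : c' would be an affine combination of a, b, contradicting independence of σ'
    have h0 : α' • a + β' • b + (-1 : ℝ) • c' = 0 := by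
      rw [hrep, ← hγ0]
      module
    have := facet_linIndep hσ' hab hc'a.symm hc'b.symm hτ' h0
    have : (-1 : ℝ) = 0 := this.2.2
    norm_num at this
  · -- γ' > 0 : a point slightly inside σ' on the c' side would also be in σ
    set t : ℝ := 1 / (1 + 2 * |α'| + 2 * |β'|) with ht
    have hden : (0:ℝ) < 1 + 2 * |α'| + 2 * |β'| := by positivity
    have htpos : 0 < t := by positivity
    have htle : t * (1 + 2 * |α'| + 2 * |β'|) = 1 := by
      rw [ht]; field_simp
    have ht1 : t ≤ 1 := by
      rw [ht, div_le_one hden]; nlinarith [abs_nonneg α', abs_nonneg β']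
    set z : E := ((1 - t)/2 + t * α') • a + ((1 - t)/2 + t * β') • b + (t * γ') • c with hz
    have hza : 0 ≤ (1 - t)/2 + t * α' := by
      nlinarith [le_abs_self α', neg_abs_le α', abs_nonneg α', abs_nonneg β', htpos]
    have hzb : 0 ≤ (1 - t)/2 + t * β' := by
      nlinarith [le_abs_self β', neg_abs_le β', abs_nonneg α', abs_nonneg β', htpos]
    have hzsum : ((1 - t)/2 + t * α') + ((1 - t)/2 + t * β') + t * γ' = 1 := by
      have : α' + β' + γ' = 1 := hsum
      nlinarith [this]
    have hzσ : z ∈ convexHull ℝ (σ : Set E) := by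
      rw [hτ, mem_hull3 hab hac hbc]
      exact ⟨_, _, _, hza, hzb, by positivity, hzsum, rfl⟩
    have hzσ' : z ∈ convexHull ℝ (σ' : Set E) := by
      have hm : ((1:ℝ)/2) • a + ((1:ℝ)/2) • b + (0:ℝ) • c' ∈ convexHull ℝ (σ' : Set E) := by
        rw [hτ', mem_hull3 hab hc'a.symm hc'b.symm]
        exact ⟨_, _, _, by norm_num, by norm_num, le_refl 0, by norm_num, rfl⟩
      have hc'mem : c' ∈ convexHull ℝ (σ' : Set E) := by
        apply subset_convexHull
        rw [hτ']; simp
      have := (convex_convexHull ℝ (σ' : Set E)) hm hc'mem (by linarith : (0:ℝ) ≤ 1 - t)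
        (le_of_lt htpos) (by ring)
      convert this using 1
      rw [hz, hrep]
      module
    have hzint : z ∈ convexHull ℝ ((σ ∩ σ' : Finset E) : Set E) := by
      rw [← T.faceToFace σ hσ σ' hσ']
      exact ⟨hzσ, hzσ'⟩
    rw [hinter, mem_hull2 hab] at hzint
    obtain ⟨s, s', _, _, hss', hzrep⟩ := hzint
    have heq : ((1 - t)/2 + t * α') • a + ((1 - t)/2 + t * β') • b + (t * γ') • c
        = s • a + s' • b + (0:ℝ) • c := by
      rw [← hz, hzrep]; module
    have := bary_unique hσ hab hac hbc hτ heq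
    have hzero : t * γ' = 0 := this.2.2
    nlinarith [htpos, hγpos]

lemma bary_rep (hσ : σ ∈ T.facets) (hab : a ≠ b) (hac : a ≠ c) (hbc : b ≠ c)
    (hτ : σ = {a, b, c}) {x : E} (hx : x ∈ stdSimplex ℝ (Fin 3)) :
    ∃ α β γ : ℝ, α + β + γ = 1 ∧ x = α • a + β • b + γ • c := by
  obtain ⟨α, β, γ, hrep⟩ := bary_exists hσ hab hac hbc hτ x
  refine ⟨α, β, γ, ?_, hrep⟩
  have ha : a ∈ σ := by rw [hτ]; simp
  have hb : b ∈ σ := by rw [hτ]; simp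
  have hc : c ∈ σ := by rw [hτ]; simp
  have ha' := (mem_Δ_iff.1 (vertex_mem hσ ha)).2
  have hb' := (mem_Δ_iff.1 (vertex_mem hσ hb)).2
  have hc' := (mem_Δ_iff.1 (vertex_mem hσ hc)).2
  have hx' := (mem_Δ_iff.1 hx).2
  have h0 := congrFun hrep 0
  have h1 := congrFun hrep 1
  have h2 := congrFun hrep 2
  simp only [Pi.add_apply, Pi.smul_apply, smul_eq_mul] at h0 h1 h2
  linear_combination hx' - h0 - h1 - h2 - α * ha' - β * hb' - γ * hc'

/-- No 2-element edge is contained in three distinct facets. -/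
lemma at_most_two {σ σ' σ'' : Finset E} (hσ : σ ∈ T.facets) (hσ' : σ' ∈ T.facets)
    (hσ'' : σ'' ∈ T.facets) (h1 : σ ≠ σ') (h2 : σ ≠ σ'') (h3 : σ' ≠ σ'')
    (hab : a ≠ b) (hs : {a, b} ⊆ σ) (hs' : {a, b} ⊆ σ') (hs'' : {a, b} ⊆ σ'') : False := by
  obtain ⟨c, hca, hcb, hτ⟩ := third_vertex hσ hab hs
  obtain ⟨c', hc'a, hc'b, hτ'⟩ := third_vertex hσ' hab hs'
  obtain ⟨c'', hc''a, hc''b, hτ''⟩ := third_vertex hσ'' hab hs''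
  have hcΔ : ∀ v ∈ σ', v ∈ stdSimplex ℝ (Fin 3) := fun v hv => vertex_mem hσ' hv
  obtain ⟨α₁, β₁, γ₁, hsum₁, hrep₁⟩ := bary_rep hσ hab hca.symm hcb.symm hτ
    (vertex_mem hσ' (by rw [hτ']; simp : c' ∈ σ'))
  obtain ⟨α₂, β₂, γ₂, hsum₂, hrep₂⟩ := bary_rep hσ hab hca.symm hcb.symm hτ
    (vertex_mem hσ'' (by rw [hτ'']; simp : c'' ∈ σ''))
  obtain ⟨p, q, r, hsum₃, hrep₃⟩ := bary_rep hσ' hab hc'a.symm hc'b.symm hτ'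
    (vertex_mem hσ'' (by rw [hτ'']; simp : c'' ∈ σ''))
  have hγ₁ : γ₁ < 0 := side_neg hσ hσ' h1 hab hca.symm hcb.symm hτ hc'a hc'b hτ' hsum₁ hrep₁
  have hγ₂ : γ₂ < 0 := side_neg hσ hσ'' h2 hab hca.symm hcb.symm hτ hc''a hc''b hτ'' hsum₂ hrep₂
  have hr : r < 0 := side_neg hσ' hσ'' h3 hab hc'a.symm hc'b.symm hτ' hc''a hc''b hτ'' hsum₃ hrep₃
  -- substitute
  have hrep₄ : c'' = (p + r * α₁) • a + (q + r * β₁) • b + (r * γ₁) • c := by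
    rw [hrep₃, hrep₁]; module
  have heq : α₂ • a + β₂ • b + γ₂ • c = (p + r * α₁) • a + (q + r * β₁) • b + (r * γ₁) • c := by
    rw [← hrep₂, ← hrep₄]
  have := bary_unique hσ hab hca.symm hcb.symm hτ heq
  nlinarith [this.2.2, hγ₁, hγ₂, hr]

open Filter Topology in
lemma limit_facet (x : E) (y : ℕ → E) (hy : ∀ n, y n ∈ stdSimplex ℝ (Fin 3))
    (hlim : Filter.Tendsto y Filter.atTop (nhds x)) :
    ∃ σ ∈ T.facets, x ∈ convexHull ℝ (σ : Set E) ∧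
      {n | y n ∈ convexHull ℝ (σ : Set E)}.Infinite := by
  have hcov : ∀ n, ∃ σ ∈ T.facets, y n ∈ convexHull ℝ (σ : Set E) := by
    intro n
    have : y n ∈ ⋃ σ ∈ T.facets, convexHull ℝ (σ : Set E) := by rw [T.covers]; exact hy n
    simpa using this
  have hexinf : ∃ σ ∈ T.facets, {n | y n ∈ convexHull ℝ (σ : Set E)}.Infinite := by
    by_contra hfin
    push_neg at hfin
    have : (Set.univ : Set ℕ) ⊆ ⋃ σ ∈ (T.facets : Set (Finset E)),
        {n | y n ∈ convexHull ℝ (σ : Set E)} := by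
      intro n _
      obtain ⟨σ, hσ, hn⟩ := hcov n
      exact Set.mem_biUnion hσ hn
    have hfin2 : (Set.univ : Set ℕ).Finite :=
      Set.Finite.subset (Set.Finite.biUnion (T.facets.finite_toSet)
        (fun σ hσ => hfin σ hσ)) this
    exact Set.infinite_univ hfin2
  obtain ⟨σ, hσ, hinf⟩ := hexinf
  refine ⟨σ, hσ, ?_, hinf⟩
  have hclosed : IsClosed (convexHull ℝ (σ : Set E)) := σ.finite_toSet.isClosed_convexHull (𝕜 := ℝ)
  rw [← hclosed.closure_eq]
  exact mem_closure_of_frequently_of_tendsto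
    (Nat.frequently_atTop_iff_infinite.2 hinf) hlim

open Filter Topology in
/-- An edge not on the boundary of the simplex is shared by a second facet. -/
lemma exists_second_facet (hσ : σ ∈ T.facets) (hab : a ≠ b) (hsub : {a, b} ⊆ σ)
    (hint : ¬ ∃ i, a i = 0 ∧ b i = 0) :
    ∃ σ' ∈ T.facets, σ' ≠ σ ∧ {a, b} ⊆ σ' := by
  obtain ⟨c, hca, hcb, hτ⟩ := third_vertex hσ hab hsub
  have hac : a ≠ c := hca.symm
  have hbc : b ≠ c := hcb.symm
  have haΔ := mem_Δ_iff.1 (vertex_mem hσ (hsub (by simp : a ∈ ({a,b}:Finset E))))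
  have hbΔ := mem_Δ_iff.1 (vertex_mem hσ (hsub (by simp : b ∈ ({a,b}:Finset E))))
  have hcΔ := mem_Δ_iff.1 (vertex_mem hσ (by rw [hτ]; simp : c ∈ σ))
  set m : E := ((1:ℝ)/2) • a + ((1:ℝ)/2) • b with hmdef
  set d : E := m - c with hddef
  have hm : ∀ i, m i = (a i + b i)/2 := fun i => by simp [hmdef]; ring
  have hd : ∀ i, d i = m i - c i := fun i => by simp [hddef]
  have hmpos : ∀ i, 0 < m i := by
    intro i
    rcases lt_or_eq_of_le (haΔ.1 i) with h | h
    · have := hbΔ.1 i; rw [hm i]; linarith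
    · rcases lt_or_eq_of_le (hbΔ.1 i) with h' | h'
      · rw [hm i]; linarith
      · exact absurd ⟨i, h.symm, h'.symm⟩ hint
  set q : Fin 3 → ℝ := fun i => m i / (1 + |d i|) with hq
  have hqpos : ∀ i, 0 < q i := fun i => div_pos (hmpos i) (by positivity)
  set t₀ : ℝ := min (min (q 0) (q 1)) (q 2) with ht₀
  have ht₀pos : 0 < t₀ := lt_min (lt_min (hqpos 0) (hqpos 1)) (hqpos 2)
  have ht₀le : ∀ i, t₀ ≤ q i := by
    intro i
    fin_cases i
    · exact le_trans (min_le_left _ _) (min_le_left _ _)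
    · exact le_trans (min_le_left _ _) (min_le_right _ _)
    · exact min_le_right _ _
  set y : ℕ → E := fun n => m + (t₀ * (1/((n:ℝ)+1))) • d with hy
  have hs : ∀ n : ℕ, 0 < t₀ * (1/((n:ℝ)+1)) ∧ t₀ * (1/((n:ℝ)+1)) ≤ t₀ := by
    intro n
    have hn : (0:ℝ) < (n:ℝ) + 1 := by positivity
    constructor
    · positivity
    · have h1 : (1:ℝ)/((n:ℝ)+1) ≤ 1 := by rw [div_le_one hn]; linarith
      exact mul_le_of_le_one_right (le_of_lt ht₀pos) h1
  have hyΔ : ∀ n, y n ∈ stdSimplex ℝ (Fin 3) := by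
    intro n
    set s := t₀ * (1/((n:ℝ)+1)) with hsdef
    have hs1 := (hs n).1
    have hs2 := (hs n).2
    rw [mem_Δ_iff]
    constructor
    · intro i
      have hyi : y n i = m i + s * d i := by simp [hy, hsdef]
      have hq' : q i * (1 + |d i|) = m i := by
        rw [hq]; field_simp
      have hsq : s ≤ q i := le_trans hs2 (ht₀le i)
      rw [hyi]
      nlinarith [neg_abs_le (d i), abs_nonneg (d i), hsq, hs1, hq']
    · have h0 : y n 0 = m 0 + s * d 0 := by simp [hy, hsdef]
      have h1 : y n 1 = m 1 + s * d 1 := by simp [hy, hsdef]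
      have h2 : y n 2 = m 2 + s * d 2 := by simp [hy, hsdef]
      have hmsum : m 0 + m 1 + m 2 = 1 := by
        rw [hm 0, hm 1, hm 2]; linarith [haΔ.2, hbΔ.2]
      have hdsum : d 0 + d 1 + d 2 = 0 := by
        rw [hd 0, hd 1, hd 2]; linarith [hmsum, hcΔ.2]
      rw [h0, h1, h2]
      linear_combination hmsum + s * hdsum
  have hlim : Filter.Tendsto y Filter.atTop (nhds m) := by
    have h0 : Filter.Tendsto (fun n : ℕ => t₀ * (1/((n:ℝ)+1))) Filter.atTop (nhds 0) := by
      simpa using tendsto_one_div_add_atTop_nhds_zero_nat.const_mul t₀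
    have := (h0.smul_const d).const_add m
    simpa [hy] using this
  obtain ⟨σ', hσ', hmem, hinf⟩ := limit_facet (T := T) m y hyΔ hlim
  have hmσ : m ∈ convexHull ℝ (σ : Set E) := by
    rw [hτ, mem_hull3 hab hac hbc]
    exact ⟨1/2, 1/2, 0, by norm_num, by norm_num, le_refl 0, by norm_num, by rw [hmdef]; module⟩
  have hminter : m ∈ convexHull ℝ ((σ ∩ σ' : Finset E) : Set E) := by
    rw [← T.faceToFace σ hσ σ' hσ']
    exact ⟨hmσ, hmem⟩
  have hSsub : σ ∩ σ' ⊆ {a, b, c} := by rw [← hτ]; exact Finset.inter_subset_left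
  obtain ⟨α, β, γ, _, _, _, hsum, hrep, hA, hB, _⟩ :=
    hull_subset_coords hab hac hbc hSsub hminter
  have hm2 : m = (1/2 : ℝ) • a + (1/2 : ℝ) • b + (0:ℝ) • c := by rw [hmdef]; module
  have heqm : α • a + β • b + γ • c = (1/2:ℝ) • a + (1/2:ℝ) • b + (0:ℝ) • c := by
    rw [← hrep, ← hm2]
  have huniq := bary_unique hσ hab hac hbc hτ heqm
  have haS : a ∈ σ ∩ σ' := by
    by_contra h
    have := hA h
    rw [huniq.1] at this
    norm_num at this
  have hbS : b ∈ σ ∩ σ' := by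
    by_contra h
    have := hB h
    rw [huniq.2.1] at this
    norm_num at this
  have hsub' : {a, b} ⊆ σ' := by
    intro x hx
    rcases Finset.mem_insert.1 hx with rfl | hx
    · exact (Finset.mem_inter.1 haS).2
    · rw [Finset.mem_singleton] at hx; subst hx
      exact (Finset.mem_inter.1 hbS).2
  refine ⟨σ', hσ', ?_, hsub'⟩
  intro hEq
  subst hEq
  obtain ⟨n, hn⟩ := hinf.nonempty
  simp only [Set.mem_setOf_eq] at hn
  set s := t₀ * (1/((n:ℝ)+1)) with hsdef
  have hyn : y n = ((1+s)/2) • a + ((1+s)/2) • b + (-s) • c := by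
    show m + s • d = _
    rw [hddef, hmdef]; module
  rw [hτ, mem_hull3 hab hac hbc] at hn
  obtain ⟨α', β', γ', _, _, hγ'0, hsum', hrep'⟩ := hn
  have heqy : α' • a + β' • b + γ' • c = ((1+s)/2) • a + ((1+s)/2) • b + (-s) • c := by
    rw [← hrep', ← hyn]
  have := bary_unique hσ hab hac hbc hτ heqy
  have hγs : γ' = -s := this.2.2
  have hspos : 0 < s := (hs n).1
  linarith [hγ'0, hγs, hspos]

lemma fin3_cases (x : Fin 3) : x = 0 ∨ x = 1 ∨ x = 2 := by revert x; decide

/-- Three points of the simplex on a common coordinate face with two of them distinct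
admit a nontrivial linear relation (they are "collinear"). -/
lemma no_facet_on_face (hσ : σ ∈ T.facets) (hab : a ≠ b) (hac : a ≠ c) (hbc : b ≠ c)
    (hτ : σ = {a, b, c}) {i : Fin 3}
    (hai : a i = 0) (hbi : b i = 0) (hci : c i = 0) : False := by
  have haΔ := mem_Δ_iff.1 (vertex_mem hσ (by rw [hτ]; simp : a ∈ σ))
  have hbΔ := mem_Δ_iff.1 (vertex_mem hσ (by rw [hτ]; simp : b ∈ σ))
  have hcΔ := mem_Δ_iff.1 (vertex_mem hσ (by rw [hτ]; simp : c ∈ σ))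
  obtain ⟨j, hj⟩ : ∃ j, a j ≠ b j := by
    by_contra h
    push_neg at h
    exact hab (funext h)
  have hij : j ≠ i := fun h => hj (by rw [h, hai, hbi])
  set α : ℝ := b j - c j with hα
  set β : ℝ := c j - a j with hβ
  set γ : ℝ := a j - b j with hγ
  have hγne : γ ≠ 0 := sub_ne_zero.2 hj
  have hcoef : α + β + γ = 0 := by rw [hα, hβ, hγ]; ring
  have hjrel : α * a j + β * b j + γ * c j = 0 := by rw [hα, hβ, hγ]; ring
  have hirel : α * a i + β * b i + γ * c i = 0 := by rw [hai, hbi, hci]; ring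
  have hsumrel : α * (a 0 + a 1 + a 2) + β * (b 0 + b 1 + b 2) + γ * (c 0 + c 1 + c 2) = 0 := by
    rw [haΔ.2, hbΔ.2, hcΔ.2]; linarith [hcoef]
  have hkey : α • a + β • b + γ • c = 0 := by
    funext k
    simp only [Pi.add_apply, Pi.smul_apply, smul_eq_mul, Pi.zero_apply]
    rcases fin3_cases i with rfl | rfl | rfl <;>
      rcases fin3_cases j with rfl | rfl | rfl <;>
        rcases fin3_cases k with rfl | rfl | rfl <;>
          first
            | exact hirel
            | exact hjrel
            | (exact absurd rfl hij)
            | linarith [hsumrel, hirel, hjrel]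
  exact hγne (facet_linIndep hσ hab hac hbc hτ hkey).2.2

/-- A boundary edge lies in exactly one facet. -/
lemma boundary_unique (hσ : σ ∈ T.facets) (hab : a ≠ b) (hsub : {a, b} ⊆ σ)
    {i : Fin 3} (hai : a i = 0) (hbi : b i = 0) :
    ∀ σ' ∈ T.facets, {a, b} ⊆ σ' → σ' = σ := by
  intro σ' hσ' hsub'
  by_contra hne
  obtain ⟨c, hca, hcb, hτ⟩ := third_vertex hσ hab hsub
  obtain ⟨c', hc'a, hc'b, hτ'⟩ := third_vertex hσ' hab hsub'
  obtain ⟨α', β', γ', hsum, hrep⟩ := bary_rep hσ hab hca.symm hcb.symm hτ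
    (vertex_mem hσ' (by rw [hτ']; simp : c' ∈ σ'))
  have hγ : γ' < 0 := side_neg hσ hσ' (Ne.symm hne) hab hca.symm hcb.symm hτ hc'a hc'b hτ' hsum hrep
  have hc'i : c' i = γ' * c i := by
    have := congrFun hrep i
    simp only [Pi.add_apply, Pi.smul_apply, smul_eq_mul] at this
    rw [this, hai, hbi]; ring
  have hc'Δ := mem_Δ_iff.1 (vertex_mem hσ' (by rw [hτ']; simp : c' ∈ σ'))
  have hcΔ := mem_Δ_iff.1 (vertex_mem hσ (by rw [hτ]; simp : c ∈ σ))
  have hci : c i = 0 := by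
    by_contra h
    have h1 : 0 < c i := lt_of_le_of_ne (hcΔ.1 i) (Ne.symm h)
    have h2 : c' i < 0 := by rw [hc'i]; exact mul_neg_of_neg_of_pos hγ h1
    linarith [hc'Δ.1 i]
  exact no_facet_on_face hσ hab hca.symm hcb.symm hτ hai hbi hci

lemma count_interior (hσ : σ ∈ T.facets) (hab : a ≠ b) (hsub : {a, b} ⊆ σ)
    (hint : ¬ ∃ i, a i = 0 ∧ b i = 0) :
    (T.facets.filter (fun σ' => {a, b} ⊆ σ')).card = 2 := by
  obtain ⟨σ', hσ', hne, hsub'⟩ := exists_second_facet hσ hab hsub hint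
  rw [Finset.card_eq_two]
  refine ⟨σ, σ', hne.symm, ?_⟩
  ext x
  simp only [Finset.mem_filter, Finset.mem_insert, Finset.mem_singleton]
  constructor
  · rintro ⟨hx, hsubx⟩
    by_contra h
    push_neg at h
    exact at_most_two hσ hσ' hx hne.symm (Ne.symm h.1) (Ne.symm h.2) hab hsub hsub' hsubx
  · rintro (rfl | rfl)
    · exact ⟨hσ, hsub⟩
    · exact ⟨hσ', hsub'⟩

lemma count_boundary (hσ : σ ∈ T.facets) (hab : a ≠ b) (hsub : {a, b} ⊆ σ)
    {i : Fin 3} (hai : a i = 0) (hbi : b i = 0) :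
    (T.facets.filter (fun σ' => {a, b} ⊆ σ')).card = 1 := by
  rw [Finset.card_eq_one]
  refine ⟨σ, ?_⟩
  ext x
  simp only [Finset.mem_filter, Finset.mem_singleton]
  constructor
  · rintro ⟨hx, hsubx⟩
    exact boundary_unique hσ hab hsub hai hbi x hx hsubx
  · rintro rfl
    exact ⟨hσ, hsub⟩

/-- The bottom edges: 2-element subsets of facets lying on the face `x 2 = 0`. -/
noncomputable def Bedges (T : Triangulation 3) : Finset (Finset E) :=
  (T.facets.biUnion (fun σ => σ.powersetCard 2)).filter (fun τ => ∀ v ∈ τ, v 2 = 0)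

lemma mem_Bedges {τ : Finset E} : τ ∈ Bedges T ↔
    (∃ σ ∈ T.facets, τ ⊆ σ) ∧ τ.card = 2 ∧ ∀ v ∈ τ, v 2 = 0 := by
  simp only [Bedges, Finset.mem_filter, Finset.mem_biUnion, Finset.mem_powersetCard]
  tauto

lemma bot_ext {x y : E} (hx : x ∈ stdSimplex ℝ (Fin 3)) (hy : y ∈ stdSimplex ℝ (Fin 3))
    (hx2 : x 2 = 0) (hy2 : y 2 = 0) (h0 : x 0 = y 0) : x = y := by
  have hxΔ := mem_Δ_iff.1 hx
  have hyΔ := mem_Δ_iff.1 hy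
  funext i
  rcases fin3_cases i with rfl | rfl | rfl
  · exact h0
  · linarith [hxΔ.2, hyΔ.2]
  · rw [hx2, hy2]

lemma filter_bot_card (hσ : σ ∈ T.facets) : (σ.filter (fun v => v 2 = 0)).card ≤ 2 := by
  by_contra h
  push_neg at h
  have hsub : σ.filter (fun v => v 2 = 0) ⊆ σ := Finset.filter_subset _ _
  have hcard : σ.card = 3 := T.card_eq σ hσ
  have hle : σ.card ≤ (σ.filter (fun v => v 2 = 0)).card := by
    rw [hcard]; exact h
  have heq := Finset.eq_of_subset_of_card_le hsub hle
  obtain ⟨a, b, c, hab, hac, hbc, hτ⟩ := exists_triple hσ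
  have hall : ∀ v ∈ σ, v 2 = 0 := by
    intro v hv
    have : v ∈ σ.filter (fun v => v 2 = 0) := by rw [← heq] at hv; exact hv
    exact (Finset.mem_filter.1 this).2
  exact no_facet_on_face hσ hab hac hbc hτ
    (hall a (by rw [hτ]; simp)) (hall b (by rw [hτ]; simp)) (hall c (by rw [hτ]; simp))

lemma bottom_pair (hσ : σ ∈ T.facets) {x y : E} (hx : x ∈ convexHull ℝ (σ : Set E))
    (hy : y ∈ convexHull ℝ (σ : Set E)) (hx2 : x 2 = 0) (hy2 : y 2 = 0) (hxy : x ≠ y) :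
    ∃ u v : E, u ≠ v ∧ σ.filter (fun w => w 2 = 0) = {u, v} ∧
      x ∈ convexHull ℝ (({u, v} : Finset E) : Set E) ∧
      y ∈ convexHull ℝ (({u, v} : Finset E) : Set E) ∧ ({u, v} : Finset E) ∈ Bedges T := by
  have hnn : ∀ v ∈ σ, 0 ≤ v 2 := fun v hv => (vertex_mem hσ hv).1 2
  have hxf := mem_hull_filter hnn hx hx2
  have hyf := mem_hull_filter hnn hy hy2
  set F := σ.filter (fun w => w 2 = 0) with hF
  have hcard2 : F.card = 2 := by
    rcases Nat.lt_or_ge F.card 2 with h | h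
    · exfalso
      interval_cases h2 : F.card
      · rw [Finset.card_eq_zero] at h2
        rw [h2] at hxf
        simp at hxf
      · rw [Finset.card_eq_one] at h2
        obtain ⟨u, hu⟩ := h2
        rw [hu] at hxf hyf
        simp only [Finset.coe_singleton, convexHull_singleton, Set.mem_singleton_iff] at hxf hyf
        exact hxy (hxf.trans hyf.symm)
    · exact le_antisymm (filter_bot_card hσ) h
  obtain ⟨u, v, huv, hFuv⟩ := Finset.card_eq_two.1 hcard2
  refine ⟨u, v, huv, hFuv, by rw [← hFuv]; exact hxf, by rw [← hFuv]; exact hyf, ?_⟩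
  rw [mem_Bedges]
  have husub : ({u, v} : Finset E) ⊆ σ := by
    rw [← hFuv]; exact Finset.filter_subset _ _
  refine ⟨⟨σ, hσ, husub⟩, Finset.card_pair huv, ?_⟩
  intro w hw
  have : w ∈ F := by rw [hFuv]; exact hw
  exact (Finset.mem_filter.1 this).2

lemma hull_coord_zero {τ : Finset E} {i : Fin 3} (h : ∀ v ∈ τ, v i = 0) {p : E}
    (hp : p ∈ convexHull ℝ (τ : Set E)) : p i = 0 := by
  rw [Finset.convexHull_eq] at hp
  obtain ⟨w, hw0, hw1, hcm⟩ := hp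
  rw [Finset.centerMass_eq_of_sum_1 _ _ hw1] at hcm
  have := congrFun hcm i
  rw [Finset.sum_apply] at this
  rw [← this]
  apply Finset.sum_eq_zero
  intro v hv
  simp [h v hv]

/-- Two bottom edges whose hulls share two distinct points coincide. -/
lemma overlap {τ τ' : Finset E} (hτ : τ ∈ Bedges T) (hτ' : τ' ∈ Bedges T) {p q : E}
    (hpq : p ≠ q)
    (hp : p ∈ convexHull ℝ (τ : Set E)) (hp' : p ∈ convexHull ℝ (τ' : Set E))
    (hq : q ∈ convexHull ℝ (τ : Set E)) (hq' : q ∈ convexHull ℝ (τ' : Set E)) : τ = τ' := by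
  obtain ⟨⟨σ, hσ, hτσ⟩, hτc, hτb⟩ := mem_Bedges.1 hτ
  obtain ⟨⟨σ', hσ', hτσ'⟩, hτc', hτb'⟩ := mem_Bedges.1 hτ'
  have hmono : convexHull ℝ (τ : Set E) ⊆ convexHull ℝ (σ : Set E) :=
    convexHull_mono (by exact_mod_cast hτσ)
  have hmono' : convexHull ℝ (τ' : Set E) ⊆ convexHull ℝ (σ' : Set E) :=
    convexHull_mono (by exact_mod_cast hτσ')
  have hsubF : τ ⊆ σ.filter (fun w => w 2 = 0) :=
    fun w hw => Finset.mem_filter.2 ⟨hτσ hw, hτb w hw⟩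
  have hsubF' : τ' ⊆ σ'.filter (fun w => w 2 = 0) :=
    fun w hw => Finset.mem_filter.2 ⟨hτσ' hw, hτb' w hw⟩
  have hτF : τ = σ.filter (fun w => w 2 = 0) :=
    Finset.eq_of_subset_of_card_le hsubF (by rw [hτc]; exact filter_bot_card hσ)
  have hτF' : τ' = σ'.filter (fun w => w 2 = 0) :=
    Finset.eq_of_subset_of_card_le hsubF' (by rw [hτc']; exact filter_bot_card hσ')
  by_cases hσσ' : σ = σ'
  · rw [hτF, hτF', hσσ']
  have hpi : p ∈ convexHull ℝ ((σ ∩ σ' : Finset E) : Set E) := by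
    rw [← T.faceToFace σ hσ σ' hσ']
    exact ⟨hmono hp, hmono' hp'⟩
  have hqi : q ∈ convexHull ℝ ((σ ∩ σ' : Finset E) : Set E) := by
    rw [← T.faceToFace σ hσ σ' hσ']
    exact ⟨hmono hq, hmono' hq'⟩
  have hcard : (σ ∩ σ').card ≤ 2 := by
    by_contra h
    push_neg at h
    have h3 : σ.card ≤ (σ ∩ σ').card := by rw [T.card_eq σ hσ]; exact h
    have heq := Finset.eq_of_subset_of_card_le Finset.inter_subset_left h3
    have hsub : σ ⊆ σ' := by rw [← heq]; exact Finset.inter_subset_right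
    exact hσσ' (Finset.eq_of_subset_of_card_le hsub
      (by rw [T.card_eq σ hσ, T.card_eq σ' hσ']))
  rcases Nat.lt_or_ge (σ ∩ σ').card 2 with hlt | hge
  · exfalso
    rcases Nat.lt_or_ge (σ ∩ σ').card 1 with h0 | h1
    · have : (σ ∩ σ').card = 0 := by omega
      rw [Finset.card_eq_zero] at this
      rw [this] at hpi
      simp at hpi
    · have : (σ ∩ σ').card = 1 := by omega
      rw [Finset.card_eq_one] at this
      obtain ⟨u, hu⟩ := this
      rw [hu] at hpi hqi
      simp only [Finset.coe_singleton, convexHull_singleton, Set.mem_singleton_iff] at hpi hqi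
      exact hpq (hpi.trans hqi.symm)
  have hc2 : (σ ∩ σ').card = 2 := le_antisymm hcard hge
  obtain ⟨u, v, huv, huvF⟩ := Finset.card_eq_two.1 hc2
  rw [huvF] at hpi hqi
  obtain ⟨s, t, hs0, ht0, hst, hprep⟩ := (mem_hull2 huv).1 hpi
  obtain ⟨s', t', hs0', ht0', hst', hqrep⟩ := (mem_hull2 huv).1 hqi
  have huσ : u ∈ σ ∩ σ' := by rw [huvF]; simp
  have hvσ : v ∈ σ ∩ σ' := by rw [huvF]; simp
  have hu2 : 0 ≤ u 2 := (vertex_mem hσ (Finset.mem_inter.1 huσ).1).1 2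
  have hv2 : 0 ≤ v 2 := (vertex_mem hσ (Finset.mem_inter.1 hvσ).1).1 2
  have hp2 : p 2 = 0 := hull_coord_zero hτb hp
  have hq2 : q 2 = 0 := hull_coord_zero hτb hq
  have hpe : s * u 2 + t * v 2 = 0 := by
    have := congrFun hprep 2
    simp only [Pi.add_apply, Pi.smul_apply, smul_eq_mul] at this
    rw [← this, hp2]
  have hqe : s' * u 2 + t' * v 2 = 0 := by
    have := congrFun hqrep 2
    simp only [Pi.add_apply, Pi.smul_apply, smul_eq_mul] at this
    rw [← this, hq2]
  have hss' : s ≠ s' := by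
    intro h
    apply hpq
    rw [hprep, hqrep, h, show t = t' by linarith]
  have hu20 : u 2 = 0 := by
    by_contra h
    have hu2p : 0 < u 2 := lt_of_le_of_ne hu2 (Ne.symm h)
    have h1 : s = 0 := by nlinarith
    have h2 : s' = 0 := by nlinarith
    exact hss' (h1.trans h2.symm)
  have hv20 : v 2 = 0 := by
    by_contra h
    have hv2p : 0 < v 2 := lt_of_le_of_ne hv2 (Ne.symm h)
    have h1 : t = 0 := by nlinarith
    have h2 : t' = 0 := by nlinarith
    exact hss' (by linarith)
  have huvsubF : ({u, v} : Finset E) ⊆ σ.filter (fun w => w 2 = 0) := by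
    intro w hw
    rcases Finset.mem_insert.1 hw with rfl | hw
    · exact Finset.mem_filter.2 ⟨(Finset.mem_inter.1 huσ).1, hu20⟩
    · rw [Finset.mem_singleton] at hw; subst hw
      exact Finset.mem_filter.2 ⟨(Finset.mem_inter.1 hvσ).1, hv20⟩
  have huvsubF' : ({u, v} : Finset E) ⊆ σ'.filter (fun w => w 2 = 0) := by
    intro w hw
    rcases Finset.mem_insert.1 hw with rfl | hw
    · exact Finset.mem_filter.2 ⟨(Finset.mem_inter.1 huσ).2, hu20⟩
    · rw [Finset.mem_singleton] at hw; subst hw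
      exact Finset.mem_filter.2 ⟨(Finset.mem_inter.1 hvσ).2, hv20⟩
  have h1 : ({u, v} : Finset E) = σ.filter (fun w => w 2 = 0) :=
    Finset.eq_of_subset_of_card_le huvsubF
      (by rw [Finset.card_pair huv]; exact filter_bot_card hσ)
  have h2 : ({u, v} : Finset E) = σ'.filter (fun w => w 2 = 0) :=
    Finset.eq_of_subset_of_card_le huvsubF'
      (by rw [Finset.card_pair huv]; exact filter_bot_card hσ')
  rw [hτF, hτF', ← h1, ← h2]

lemma pair_mem {τ : Finset E} {w : E} (hc : τ.card = 2) (hw : w ∈ τ) :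
    ∃ z, z ≠ w ∧ τ = {w, z} := by
  obtain ⟨x, y, hxy, hτ⟩ := Finset.card_eq_two.1 hc
  rw [hτ] at hw
  rcases Finset.mem_insert.1 hw with rfl | hw
  · exact ⟨y, hxy.symm, hτ⟩
  · rw [Finset.mem_singleton] at hw; subst hw
    exact ⟨x, hxy, by rw [hτ, Finset.pair_comm]⟩

lemma Bedge_vertex {τ : Finset E} (hτ : τ ∈ Bedges T) {v : E} (hv : v ∈ τ) :
    v ∈ stdSimplex ℝ (Fin 3) ∧ v 2 = 0 := by
  obtain ⟨⟨σ, hσ, hτσ⟩, _, hb⟩ := mem_Bedges.1 hτ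
  exact ⟨vertex_mem hσ (hτσ hv), hb v hv⟩

lemma Bedge_hull_subset {τ : Finset E} (hτ : τ ∈ Bedges T) :
    convexHull ℝ (τ : Set E) ⊆ stdSimplex ℝ (Fin 3) := by
  obtain ⟨⟨σ, hσ, hτσ⟩, _, _⟩ := mem_Bedges.1 hτ
  exact le_trans (convexHull_mono (by exact_mod_cast hτσ)) (hull_subset hσ)

lemma seg_between {l r x : E} (hlr : l ≠ r)
    (hx : x ∈ convexHull ℝ (({l, r} : Finset E) : Set E)) (h0 : l 0 ≤ r 0) :
    l 0 ≤ x 0 ∧ x 0 ≤ r 0 := by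
  obtain ⟨s, t, hs, ht, hst, hrep⟩ := (mem_hull2 hlr).1 hx
  have := congrFun hrep 0
  simp only [Pi.add_apply, Pi.smul_apply, smul_eq_mul] at this
  have e1 : x 0 - l 0 = t * (r 0 - l 0) := by linear_combination this + (l 0) * hst
  have e2 : r 0 - x 0 = s * (r 0 - l 0) := by linear_combination - this - (r 0) * hst
  constructor
  · nlinarith [e1, mul_nonneg ht (sub_nonneg.2 h0)]
  · nlinarith [e2, mul_nonneg hs (sub_nonneg.2 h0)]

lemma seg_point {u v : E} (hu : u ∈ stdSimplex ℝ (Fin 3)) (hv : v ∈ stdSimplex ℝ (Fin 3))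
    (hu2 : u 2 = 0) (hv2 : v 2 = 0) (hlt : u 0 < v 0) {c : ℝ} (hc1 : u 0 ≤ c) (hc2 : c ≤ v 0) :
    ∃ p : E, p ∈ convexHull ℝ (({u, v} : Finset E) : Set E) ∧ p 0 = c ∧ p 2 = 0 ∧
      p ∈ stdSimplex ℝ (Fin 3) := by
  have huv : u ≠ v := fun h => by rw [h] at hlt; exact lt_irrefl _ hlt
  set s : ℝ := (v 0 - c) / (v 0 - u 0) with hs
  have hd : 0 < v 0 - u 0 := by linarith
  have hs0 : 0 ≤ s := div_nonneg (by linarith) (le_of_lt hd)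
  have hs1 : s ≤ 1 := by
    rw [hs, div_le_one hd]; linarith
  set p : E := s • u + (1 - s) • v with hp
  have hmem : p ∈ convexHull ℝ (({u, v} : Finset E) : Set E) :=
    (mem_hull2 huv).2 ⟨s, 1 - s, hs0, by linarith, by ring, rfl⟩
  have hΔsub : convexHull ℝ (({u, v} : Finset E) : Set E) ⊆ stdSimplex ℝ (Fin 3) := by
    apply convexHull_min _ (convex_stdSimplex ℝ (Fin 3))
    intro x hx
    simp only [Finset.coe_insert, Finset.coe_singleton, Set.mem_insert_iff,
      Set.mem_singleton_iff] at hx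
    rcases hx with rfl | rfl
    · exact hu
    · exact hv
  refine ⟨p, hmem, ?_, ?_, hΔsub hmem⟩
  · have : p 0 = s * u 0 + (1 - s) * v 0 := by simp [hp]
    rw [this, hs]
    field_simp
    ring
  · have : p 2 = s * u 2 + (1 - s) * v 2 := by simp [hp]
    rw [this, hu2, hv2]; ring

/-- A vertex of a bottom edge cannot lie strictly inside another bottom edge. -/
lemma not_interior {τ₀ τ₁ : Finset E} {w l r : E} (hτ₀ : τ₀ ∈ Bedges T) (hwτ₀ : w ∈ τ₀)
    (hτ₁ : τ₁ ∈ Bedges T) (hτ₁eq : τ₁ = {l, r}) (hlr : l 0 < r 0)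
    (hw : w ∈ convexHull ℝ (τ₁ : Set E)) (h1 : l 0 < w 0) (h2 : w 0 < r 0) : False := by
  obtain ⟨_, hτ₀c, _⟩ := mem_Bedges.1 hτ₀
  obtain ⟨z, hzw, hτ₀eq⟩ := pair_mem hτ₀c hwτ₀
  have hwΔ := Bedge_vertex hτ₀ hwτ₀
  have hzΔ := Bedge_vertex hτ₀ (by rw [hτ₀eq]; simp : z ∈ τ₀)
  have hlΔ := Bedge_vertex hτ₁ (by rw [hτ₁eq]; simp : l ∈ τ₁)
  have hrΔ := Bedge_vertex hτ₁ (by rw [hτ₁eq]; simp : r ∈ τ₁)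
  have hzw0 : z 0 ≠ w 0 := by
    intro h
    exact hzw (bot_ext hzΔ.1 hwΔ.1 hzΔ.2 hwΔ.2 h)
  -- find a second common point p of conv τ₁ and conv τ₀
  have hwc : w ∈ convexHull ℝ (τ₀ : Set E) := subset_convexHull ℝ _ hwτ₀
  have key : ∃ p : E, (p ∈ convexHull ℝ (τ₁ : Set E) ∧ p ∈ convexHull ℝ (τ₀ : Set E) ∧
      p 0 < w 0) ∨ (p ∈ convexHull ℝ (τ₁ : Set E) ∧ p ∈ convexHull ℝ (τ₀ : Set E) ∧
      w 0 < p 0) := by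
    rcases lt_or_gt_of_ne hzw0 with hz | hz
    · -- z to the left of w
      set cc : ℝ := (max (l 0) (z 0) + w 0)/2 with hcc
      have hm1 : max (l 0) (z 0) < w 0 := max_lt h1 hz
      have hc1 : max (l 0) (z 0) ≤ cc := by rw [hcc]; linarith
      have hc2 : cc ≤ w 0 := by rw [hcc]; linarith
      obtain ⟨p, hp1, hp0, hp2, hpΔ⟩ := seg_point hlΔ.1 hrΔ.1 hlΔ.2 hrΔ.2
        (lt_trans h1 h2) (le_trans (le_max_left _ _) hc1) (le_trans hc2 (le_of_lt h2))
      obtain ⟨p', hp'1, hp'0, hp'2, hp'Δ⟩ := seg_point hzΔ.1 hwΔ.1 hzΔ.2 hwΔ.2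
        hz (le_trans (le_max_right _ _) hc1) hc2
      have hpp' : p = p' := bot_ext hpΔ hp'Δ hp2 hp'2 (by rw [hp0, hp'0])
      refine ⟨p, Or.inl ⟨by rw [hτ₁eq]; exact hp1, ?_, ?_⟩⟩
      · rw [hτ₀eq, Finset.pair_comm]
        rw [hpp']; exact hp'1
      · rw [hp0, hcc]; linarith
    · -- z to the right of w
      set cc : ℝ := (w 0 + min (r 0) (z 0))/2 with hcc
      have hm1 : w 0 < min (r 0) (z 0) := lt_min h2 hz
      have hc1 : w 0 ≤ cc := by rw [hcc]; linarith
      have hc2 : cc ≤ min (r 0) (z 0) := by rw [hcc]; linarith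
      obtain ⟨p, hp1, hp0, hp2, hpΔ⟩ := seg_point hlΔ.1 hrΔ.1 hlΔ.2 hrΔ.2
        (lt_trans h1 h2) (le_trans (le_of_lt h1) hc1) (le_trans hc2 (min_le_left _ _))
      obtain ⟨p', hp'1, hp'0, hp'2, hp'Δ⟩ := seg_point hwΔ.1 hzΔ.1 hwΔ.2 hzΔ.2
        hz hc1 (le_trans hc2 (min_le_right _ _))
      have hpp' : p = p' := bot_ext hpΔ hp'Δ hp2 hp'2 (by rw [hp0, hp'0])
      refine ⟨p, Or.inr ⟨by rw [hτ₁eq]; exact hp1, ?_, ?_⟩⟩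
      · rw [hτ₀eq, hpp']; exact hp'1
      · rw [hp0, hcc]; linarith
  obtain ⟨p, hkey⟩ := key
  rcases hkey with ⟨hp1, hp0, hlt⟩ | ⟨hp1, hp0, hlt⟩ <;>
  · have hpw : p ≠ w := fun h => by rw [h] at hlt; exact lt_irrefl _ hlt
    have := overlap hτ₁ hτ₀ hpw hp1 hp0 hw hwc
    rw [hτ₀eq] at this
    have hwτ₁ : w ∈ τ₁ := by rw [this]; simp
    rw [hτ₁eq] at hwτ₁
    rcases Finset.mem_insert.1 hwτ₁ with rfl | hwr
    · exact lt_irrefl _ h1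
    · rw [Finset.mem_singleton] at hwr; subst hwr
      exact lt_irrefl _ h2

open Filter Topology in
lemma toward {w g : E} (hw : w ∈ stdSimplex ℝ (Fin 3)) (hw2 : w 2 = 0)
    (hg : g ∈ stdSimplex ℝ (Fin 3)) (hg2 : g 2 = 0) (hne : g 0 ≠ w 0) :
    ∃ τ₁ ∈ Bedges T, w ∈ convexHull ℝ (τ₁ : Set E) ∧
      ∃ x : E, x ∈ convexHull ℝ (τ₁ : Set E) ∧ x 0 ≠ w 0 ∧ (x 0 < w 0 ↔ g 0 < w 0) := by
  set y : ℕ → E := fun n => w + (1/((n:ℝ)+1)) • (g - w) with hy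
  have hsn : ∀ n : ℕ, 0 < 1/((n:ℝ)+1) ∧ 1/((n:ℝ)+1) ≤ 1 := by
    intro n
    have hn : (0:ℝ) < (n:ℝ) + 1 := by positivity
    exact ⟨by positivity, by rw [div_le_one hn]; linarith⟩
  have hyΔ : ∀ n, y n ∈ stdSimplex ℝ (Fin 3) := by
    intro n
    have heq : y n = (1 - 1/((n:ℝ)+1)) • w + (1/((n:ℝ)+1)) • g := by
      rw [hy]; module
    rw [heq]
    exact (convex_stdSimplex ℝ (Fin 3)) hw hg (by linarith [(hsn n).2])
      (le_of_lt (hsn n).1) (by ring)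
  have hlim : Filter.Tendsto y Filter.atTop (nhds w) := by
    have h0 : Filter.Tendsto (fun n : ℕ => 1/((n:ℝ)+1)) Filter.atTop (nhds 0) :=
      tendsto_one_div_add_atTop_nhds_zero_nat
    have h1 := (h0.smul_const (g - w)).const_add w
    simpa [hy, one_div] using h1
  obtain ⟨σ, hσ, hwσ, hinf⟩ := limit_facet (T := T) w y hyΔ hlim
  obtain ⟨n, hn⟩ := hinf.nonempty
  simp only [Set.mem_setOf_eq] at hn
  have hy0 : y n 0 - w 0 = (1/((n:ℝ)+1)) * (g 0 - w 0) := by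
    simp only [hy, Pi.add_apply, Pi.smul_apply, smul_eq_mul, Pi.sub_apply]
    ring
  have hy2 : y n 2 = 0 := by
    simp only [hy, Pi.add_apply, Pi.smul_apply, smul_eq_mul, Pi.sub_apply, hw2, hg2]
    ring
  have hyne : y n ≠ w := by
    intro h
    rw [h] at hy0
    have := (hsn n).1
    rcases lt_or_gt_of_ne hne with hlt | hlt <;> nlinarith [hy0]
  obtain ⟨u, v, huv, _, hwuv, hyuv, hBe⟩ := bottom_pair hσ hwσ hn hw2 hy2 (Ne.symm hyne)
  refine ⟨{u, v}, hBe, hwuv, y n, hyuv, ?_, ?_⟩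
  · intro h
    rw [h] at hy0
    have := (hsn n).1
    rcases lt_or_gt_of_ne hne with hlt | hlt <;> nlinarith [hy0]
  · have := (hsn n).1
    constructor <;> intro h <;> nlinarith [hy0]

def botpt (t : ℝ) : E := fun i => if i = 0 then t else if i = 1 then 1 - t else 0

lemma botpt_mem {t : ℝ} (h0 : 0 ≤ t) (h1 : t ≤ 1) : botpt t ∈ stdSimplex ℝ (Fin 3) := by
  rw [mem_Δ_iff]
  constructor
  · intro i
    rcases fin3_cases i with rfl | rfl | rfl <;> simp [botpt] <;> linarith
  · simp [botpt]

lemma coord_le_one {w : E} (hw : w ∈ stdSimplex ℝ (Fin 3)) : w 0 ≤ 1 := by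
  have := mem_Δ_iff.1 hw
  linarith [this.1 1, this.1 2, this.2]

lemma left_edge {τ₀ : Finset E} {w : E} (hτ₀ : τ₀ ∈ Bedges T) (hwτ : w ∈ τ₀)
    (h0 : 0 < w 0) :
    ∃ z, z ≠ w ∧ ({w, z} : Finset E) ∈ Bedges T ∧ z 0 < w 0 := by
  have hwΔ := Bedge_vertex hτ₀ hwτ
  have hg : botpt 0 ∈ stdSimplex ℝ (Fin 3) := botpt_mem le_rfl zero_le_one
  have hg2 : botpt 0 2 = 0 := by simp [botpt]
  have hg0 : botpt 0 0 = 0 := by simp [botpt]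
  obtain ⟨τ₁, hτ₁, hwc, x, hxc, hxne, hxlt⟩ :=
    toward (T := T) hwΔ.1 hwΔ.2 hg hg2 (by rw [hg0]; exact ne_of_lt h0)
  have hxlt' : x 0 < w 0 := hxlt.2 (by rw [hg0]; exact h0)
  obtain ⟨_, hc, _⟩ := mem_Bedges.1 hτ₁
  obtain ⟨u, v, huv, hτ₁eq⟩ := Finset.card_eq_two.1 hc
  have huΔ := Bedge_vertex hτ₁ (by rw [hτ₁eq]; simp : u ∈ τ₁)
  have hvΔ := Bedge_vertex hτ₁ (by rw [hτ₁eq]; simp : v ∈ τ₁)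
  have huv0 : u 0 ≠ v 0 := fun h => huv (bot_ext huΔ.1 hvΔ.1 huΔ.2 hvΔ.2 h)
  -- order the pair
  obtain ⟨l, r, hlr0, hlrΔ, hrΔ, hτ₁eq'⟩ :
      ∃ l r : E, l 0 < r 0 ∧ (l ∈ stdSimplex ℝ (Fin 3) ∧ l 2 = 0) ∧
        (r ∈ stdSimplex ℝ (Fin 3) ∧ r 2 = 0) ∧ τ₁ = {l, r} := by
    rcases lt_or_gt_of_ne huv0 with h | h
    · exact ⟨u, v, h, huΔ, hvΔ, hτ₁eq⟩
    · exact ⟨v, u, h, hvΔ, huΔ, by rw [hτ₁eq, Finset.pair_comm]⟩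
  have hlner : l ≠ r := fun h => by rw [h] at hlr0; exact lt_irrefl _ hlr0
  rw [hτ₁eq'] at hwc hxc
  have hwb := seg_between hlner hwc (le_of_lt hlr0)
  have hxb := seg_between hlner hxc (le_of_lt hlr0)
  have hwr : w = r := by
    rcases eq_or_lt_of_le hwb.2 with h | hlt2
    · exact bot_ext hwΔ.1 hrΔ.1 hwΔ.2 hrΔ.2 h
    · exfalso
      rcases eq_or_lt_of_le hwb.1 with h | hlt1
      · linarith [hxb.1, hxlt']
      · exact not_interior hτ₀ hwτ hτ₁ hτ₁eq' hlr0 (by rw [hτ₁eq']; exact hwc) hlt1 hlt2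
  refine ⟨l, fun h => hlner (h.trans hwr), ?_, ?_⟩
  · rw [hwr, Finset.pair_comm, ← hτ₁eq']; exact hτ₁
  · rw [hwr]; linarith [hxb.1, hxlt']

lemma right_edge {τ₀ : Finset E} {w : E} (hτ₀ : τ₀ ∈ Bedges T) (hwτ : w ∈ τ₀)
    (h1 : w 0 < 1) :
    ∃ z, z ≠ w ∧ ({w, z} : Finset E) ∈ Bedges T ∧ w 0 < z 0 := by
  have hwΔ := Bedge_vertex hτ₀ hwτ
  have hg : botpt 1 ∈ stdSimplex ℝ (Fin 3) := botpt_mem zero_le_one le_rfl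
  have hg2 : botpt 1 2 = 0 := by simp [botpt]
  have hg0 : botpt 1 0 = 1 := by simp [botpt]
  obtain ⟨τ₁, hτ₁, hwc, x, hxc, hxne, hxlt⟩ :=
    toward (T := T) hwΔ.1 hwΔ.2 hg hg2 (by rw [hg0]; exact (ne_of_lt h1).symm)
  have hxgt : w 0 < x 0 := by
    rcases lt_or_gt_of_ne hxne with h | h
    · exfalso
      have := hxlt.1 h
      rw [hg0] at this
      linarith
    · exact h
  obtain ⟨_, hc, _⟩ := mem_Bedges.1 hτ₁
  obtain ⟨u, v, huv, hτ₁eq⟩ := Finset.card_eq_two.1 hc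
  have huΔ := Bedge_vertex hτ₁ (by rw [hτ₁eq]; simp : u ∈ τ₁)
  have hvΔ := Bedge_vertex hτ₁ (by rw [hτ₁eq]; simp : v ∈ τ₁)
  have huv0 : u 0 ≠ v 0 := fun h => huv (bot_ext huΔ.1 hvΔ.1 huΔ.2 hvΔ.2 h)
  obtain ⟨l, r, hlr0, hlrΔ, hrΔ, hτ₁eq'⟩ :
      ∃ l r : E, l 0 < r 0 ∧ (l ∈ stdSimplex ℝ (Fin 3) ∧ l 2 = 0) ∧
        (r ∈ stdSimplex ℝ (Fin 3) ∧ r 2 = 0) ∧ τ₁ = {l, r} := by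
    rcases lt_or_gt_of_ne huv0 with h | h
    · exact ⟨u, v, h, huΔ, hvΔ, hτ₁eq⟩
    · exact ⟨v, u, h, hvΔ, huΔ, by rw [hτ₁eq, Finset.pair_comm]⟩
  have hlner : l ≠ r := fun h => by rw [h] at hlr0; exact lt_irrefl _ hlr0
  rw [hτ₁eq'] at hwc hxc
  have hwb := seg_between hlner hwc (le_of_lt hlr0)
  have hxb := seg_between hlner hxc (le_of_lt hlr0)
  have hwl : w = l := by
    rcases eq_or_lt_of_le hwb.1 with h | hlt1
    · exact (bot_ext hlrΔ.1 hwΔ.1 hlrΔ.2 hwΔ.2 h).symm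
    · exfalso
      rcases eq_or_lt_of_le hwb.2 with h | hlt2
      · linarith [hxb.2, hxgt]
      · exact not_interior hτ₀ hwτ hτ₁ hτ₁eq' hlr0 (by rw [hτ₁eq']; exact hwc) hlt1 hlt2
  refine ⟨r, fun h => hlner (hwl ▸ h.symm), ?_, ?_⟩
  · rw [hwl, ← hτ₁eq']; exact hτ₁
  · rw [hwl]; linarith [hxb.2, hxgt]

/-- `e₀ = (1,0,0)` belongs to some bottom edge. -/
lemma e0_mem_edge : ∃ τ ∈ Bedges T, botpt 1 ∈ τ := by
  have hg : botpt 0 ∈ stdSimplex ℝ (Fin 3) := botpt_mem le_rfl zero_le_one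
  have hw : botpt 1 ∈ stdSimplex ℝ (Fin 3) := botpt_mem zero_le_one le_rfl
  have hw2 : botpt 1 2 = 0 := by simp [botpt]
  have hg2 : botpt 0 2 = 0 := by simp [botpt]
  have hne : botpt 0 0 ≠ botpt 1 0 := by simp [botpt]
  obtain ⟨τ₁, hτ₁, hwc, x, hxc, hxne, hxlt⟩ := toward (T := T) hw hw2 hg hg2 hne
  obtain ⟨_, hc, _⟩ := mem_Bedges.1 hτ₁
  obtain ⟨u, v, huv, hτ₁eq⟩ := Finset.card_eq_two.1 hc
  have huΔ := Bedge_vertex hτ₁ (by rw [hτ₁eq]; simp : u ∈ τ₁)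
  have hvΔ := Bedge_vertex hτ₁ (by rw [hτ₁eq]; simp : v ∈ τ₁)
  have huv0 : u 0 ≠ v 0 := fun h => huv (bot_ext huΔ.1 hvΔ.1 huΔ.2 hvΔ.2 h)
  obtain ⟨l, r, hlr0, hlrΔ, hrΔ, hτ₁eq'⟩ :
      ∃ l r : E, l 0 < r 0 ∧ (l ∈ stdSimplex ℝ (Fin 3) ∧ l 2 = 0) ∧
        (r ∈ stdSimplex ℝ (Fin 3) ∧ r 2 = 0) ∧ τ₁ = {l, r} := by
    rcases lt_or_gt_of_ne huv0 with h | h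
    · exact ⟨u, v, h, huΔ, hvΔ, hτ₁eq⟩
    · exact ⟨v, u, h, hvΔ, huΔ, by rw [hτ₁eq, Finset.pair_comm]⟩
  have hlner : l ≠ r := fun h => by rw [h] at hlr0; exact lt_irrefl _ hlr0
  rw [hτ₁eq'] at hwc
  have hwb := seg_between hlner hwc (le_of_lt hlr0)
  have hr1 : r 0 ≤ 1 := coord_le_one hrΔ.1
  have hw1 : botpt 1 0 = 1 := by simp [botpt]
  have : botpt 1 = r := by
    apply bot_ext hw hrΔ.1 hw2 hrΔ.2
    rw [hw1]
    linarith [hwb.2, hr1]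
  refine ⟨τ₁, hτ₁, ?_⟩
  rw [hτ₁eq', this]
  simp

lemma side_unique_left {w z z' : E} (h1 : ({w, z} : Finset E) ∈ Bedges T)
    (h2 : ({w, z'} : Finset E) ∈ Bedges T) (hz : z 0 < w 0) (hz' : z' 0 < w 0) :
    ({w, z} : Finset E) = {w, z'} := by
  have hwΔ := Bedge_vertex h1 (by simp : w ∈ ({w, z} : Finset E))
  have hzΔ := Bedge_vertex h1 (by simp : z ∈ ({w, z} : Finset E))
  have hz'Δ := Bedge_vertex h2 (by simp : z' ∈ ({w, z'} : Finset E))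
  set cc : ℝ := (max (z 0) (z' 0) + w 0)/2 with hcc
  have hm : max (z 0) (z' 0) < w 0 := max_lt hz hz'
  have hc1 : max (z 0) (z' 0) ≤ cc := by rw [hcc]; linarith
  have hc2 : cc ≤ w 0 := by rw [hcc]; linarith
  obtain ⟨p, hp1, hp0, hp2, hpΔ⟩ := seg_point hzΔ.1 hwΔ.1 hzΔ.2 hwΔ.2 hz
    (le_trans (le_max_left _ _) hc1) hc2
  obtain ⟨p', hp'1, hp'0, hp'2, hp'Δ⟩ := seg_point hz'Δ.1 hwΔ.1 hz'Δ.2 hwΔ.2 hz'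
    (le_trans (le_max_right _ _) hc1) hc2
  have hpp' : p = p' := bot_ext hpΔ hp'Δ hp2 hp'2 (by rw [hp0, hp'0])
  have hpw : p ≠ w := by
    intro h
    rw [h] at hp0
    rw [hp0] at hc2
    linarith [hm, hc1]
  have hwm1 : w ∈ convexHull ℝ (({w, z} : Finset E) : Set E) :=
    subset_convexHull ℝ _ (by simp)
  have hwm2 : w ∈ convexHull ℝ (({w, z'} : Finset E) : Set E) :=
    subset_convexHull ℝ _ (by simp)
  exact overlap h1 h2 hpw (by rw [Finset.pair_comm]; exact hp1)
    (by rw [Finset.pair_comm]; rw [hpp']; exact hp'1) hwm1 hwm2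

lemma side_unique_right {w z z' : E} (h1 : ({w, z} : Finset E) ∈ Bedges T)
    (h2 : ({w, z'} : Finset E) ∈ Bedges T) (hz : w 0 < z 0) (hz' : w 0 < z' 0) :
    ({w, z} : Finset E) = {w, z'} := by
  have hwΔ := Bedge_vertex h1 (by simp : w ∈ ({w, z} : Finset E))
  have hzΔ := Bedge_vertex h1 (by simp : z ∈ ({w, z} : Finset E))
  have hz'Δ := Bedge_vertex h2 (by simp : z' ∈ ({w, z'} : Finset E))
  set cc : ℝ := (w 0 + min (z 0) (z' 0))/2 with hcc
  have hm : w 0 < min (z 0) (z' 0) := lt_min hz hz'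
  have hc1 : w 0 ≤ cc := by rw [hcc]; linarith
  have hc2 : cc ≤ min (z 0) (z' 0) := by rw [hcc]; linarith
  obtain ⟨p, hp1, hp0, hp2, hpΔ⟩ := seg_point hwΔ.1 hzΔ.1 hwΔ.2 hzΔ.2 hz
    hc1 (le_trans hc2 (min_le_left _ _))
  obtain ⟨p', hp'1, hp'0, hp'2, hp'Δ⟩ := seg_point hwΔ.1 hz'Δ.1 hwΔ.2 hz'Δ.2 hz'
    hc1 (le_trans hc2 (min_le_right _ _))
  have hpp' : p = p' := bot_ext hpΔ hp'Δ hp2 hp'2 (by rw [hp0, hp'0])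
  have hpw : p ≠ w := by
    intro h
    rw [h] at hp0
    rw [hp0] at hc1
    linarith [hm, hc2]
  have hwm1 : w ∈ convexHull ℝ (({w, z} : Finset E) : Set E) :=
    subset_convexHull ℝ _ (by simp)
  have hwm2 : w ∈ convexHull ℝ (({w, z'} : Finset E) : Set E) :=
    subset_convexHull ℝ _ (by simp)
  exact overlap h1 h2 hpw hp1 (by rw [hpp']; exact hp'1) hwm1 hwm2

lemma deg_count {τ₀ : Finset E} {w : E} (hτ₀ : τ₀ ∈ Bedges T) (hwτ : w ∈ τ₀)
    (h0 : 0 < w 0) :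
    ((Bedges T).filter (fun τ => w ∈ τ)).card = if w 0 = 1 then 1 else 2 := by
  classical
  have hwΔ := Bedge_vertex hτ₀ hwτ
  set L := (Bedges T).filter (fun τ => ∃ z, z ≠ w ∧ τ = {w, z} ∧ z 0 < w 0) with hL
  set R := (Bedges T).filter (fun τ => ∃ z, z ≠ w ∧ τ = {w, z} ∧ w 0 < z 0) with hR
  have hsplit : (Bedges T).filter (fun τ => w ∈ τ) = L ∪ R := by
    ext τ
    simp only [hL, hR, Finset.mem_filter, Finset.mem_union]
    constructor
    · rintro ⟨hτB, hwmem⟩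
      obtain ⟨_, hc, _⟩ := mem_Bedges.1 hτB
      obtain ⟨z, hzw, hτeq⟩ := pair_mem hc hwmem
      have hzΔ := Bedge_vertex hτB (by rw [hτeq]; simp : z ∈ τ)
      have : z 0 ≠ w 0 := fun h => hzw (bot_ext hzΔ.1 hwΔ.1 hzΔ.2 hwΔ.2 h)
      rcases lt_or_gt_of_ne this with h | h
      · exact Or.inl ⟨hτB, z, hzw, hτeq, h⟩
      · exact Or.inr ⟨hτB, z, hzw, hτeq, h⟩
    · rintro (⟨hτB, z, hzw, hτeq, _⟩ | ⟨hτB, z, hzw, hτeq, _⟩) <;>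
        exact ⟨hτB, by rw [hτeq]; simp⟩
  have hdisj : Disjoint L R := by
    rw [Finset.disjoint_left]
    rintro τ hτL hτR
    simp only [hL, hR, Finset.mem_filter] at hτL hτR
    obtain ⟨_, z, hzw, hτeq, hzlt⟩ := hτL
    obtain ⟨_, z', hz'w, hτeq', hz'lt⟩ := hτR
    have : z' ∈ ({w, z} : Finset E) := by rw [← hτeq, hτeq']; simp
    rcases Finset.mem_insert.1 this with rfl | hz'z
    · linarith
    · rw [Finset.mem_singleton] at hz'z; subst hz'z; linarith
  have hLcard : L.card = 1 := by
    obtain ⟨z, hzw, hzB, hzlt⟩ := left_edge (T := T) hτ₀ hwτ h0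
    rw [Finset.card_eq_one]
    refine ⟨{w, z}, ?_⟩
    ext τ
    simp only [hL, Finset.mem_filter, Finset.mem_singleton]
    constructor
    · rintro ⟨hτB, z', hz'w, hτeq, hz'lt⟩
      rw [hτeq]
      exact side_unique_left (by rw [← hτeq]; exact hτB) hzB hz'lt hzlt
    · rintro rfl
      exact ⟨hzB, z, hzw, rfl, hzlt⟩
  have hw1 : w 0 ≤ 1 := coord_le_one hwΔ.1
  rw [hsplit, Finset.card_union_of_disjoint hdisj, hLcard]
  by_cases hcase : w 0 = 1
  · rw [if_pos hcase]
    have : R = ∅ := by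
      rw [Finset.eq_empty_iff_forall_notMem]
      intro τ hτR
      simp only [hR, Finset.mem_filter] at hτR
      obtain ⟨hτB, z, hzw, hτeq, hzlt⟩ := hτR
      have hzΔ := Bedge_vertex hτB (by rw [hτeq]; simp : z ∈ τ)
      have := coord_le_one hzΔ.1
      rw [hcase] at hzlt
      linarith
    rw [this]
    simp
  · rw [if_neg hcase]
    have hRcard : R.card = 1 := by
      obtain ⟨z, hzw, hzB, hzlt⟩ := right_edge (T := T) hτ₀ hwτ
        (lt_of_le_of_ne hw1 hcase)
      rw [Finset.card_eq_one]
      refine ⟨{w, z}, ?_⟩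
      ext τ
      simp only [hR, Finset.mem_filter, Finset.mem_singleton]
      constructor
      · rintro ⟨hτB, z', hz'w, hτeq, hz'lt⟩
        rw [hτeq]
        exact side_unique_right (by rw [← hτeq]; exact hτB) hzB hz'lt hzlt
      · rintro rfl
        exact ⟨hzB, z, hzw, rfl, hzlt⟩
    rw [hRcard]

/-- Generic double counting. -/
lemma dc {β γ : Type} [DecidableEq β] [DecidableEq γ] (B : Finset β) (F : β → Finset γ) :
    ∑ b ∈ B, (F b).card = ∑ c ∈ B.biUnion F, (B.filter (fun b => c ∈ F b)).card := by
  have h1 : ∀ b ∈ B, (F b).card = ∑ c ∈ B.biUnion F, if c ∈ F b then 1 else 0 := by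
    intro b hb
    rw [← Finset.card_filter]
    congr 1
    ext c
    simp only [Finset.mem_filter, Finset.mem_biUnion]
    exact ⟨fun h => ⟨⟨b, hb, h⟩, h⟩, fun h => h.2⟩
  rw [Finset.sum_congr rfl h1, Finset.sum_comm]
  apply Finset.sum_congr rfl
  intro c _
  rw [Finset.card_filter]

variable {ℓ : E → Fin 3}

/-- The "doors" of a facet: its edges labeled `{0,1}`. -/
noncomputable def doorsOf (ℓ : E → Fin 3) (σ : Finset E) : Finset (Finset E) :=
  (σ.powersetCard 2).filter (fun τ => τ.image ℓ = ({0, 1} : Finset (Fin 3)))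

lemma mem_doorsOf {σ τ : Finset E} :
    τ ∈ doorsOf ℓ σ ↔ τ ⊆ σ ∧ τ.card = 2 ∧ τ.image ℓ = ({0, 1} : Finset (Fin 3)) := by
  simp only [doorsOf, Finset.mem_filter, Finset.mem_powersetCard]
  tauto

lemma pair_subset_triple {τ : Finset E} (hab : a ≠ b) (hac : a ≠ c) (hbc : b ≠ c)
    (hsub : τ ⊆ {a, b, c}) (hcard : τ.card = 2) :
    τ = {a, b} ∨ τ = {a, c} ∨ τ = {b, c} := by
  obtain ⟨x, y, hxy, hτ⟩ := Finset.card_eq_two.1 hcard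
  have hx : x ∈ ({a, b, c} : Finset E) := hsub (by rw [hτ]; simp)
  have hy : y ∈ ({a, b, c} : Finset E) := hsub (by rw [hτ]; simp)
  simp only [Finset.mem_insert, Finset.mem_singleton] at hx hy
  rcases hx with rfl | rfl | rfl <;> rcases hy with rfl | rfl | rfl <;>
    first
      | (exact absurd rfl hxy)
      | (subst hτ; simp [Finset.pair_comm])

lemma doors_card_eq (hab : a ≠ b) (hac : a ≠ c) (hbc : b ≠ c) :
    (doorsOf ℓ ({a, b, c} : Finset E)).card =
      (if ({ℓ a, ℓ b} : Finset (Fin 3)) = {0, 1} then 1 else 0) +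
      (if ({ℓ a, ℓ c} : Finset (Fin 3)) = {0, 1} then 1 else 0) +
      (if ({ℓ b, ℓ c} : Finset (Fin 3)) = {0, 1} then 1 else 0) := by
  classical
  have hset : doorsOf ℓ ({a, b, c} : Finset E) =
      ({{a, b}, {a, c}, {b, c}} : Finset (Finset E)).filter
        (fun τ => τ.image ℓ = ({0, 1} : Finset (Fin 3))) := by
    ext τ
    simp only [mem_doorsOf, Finset.mem_filter, Finset.mem_insert, Finset.mem_singleton]
    constructor
    · rintro ⟨hsub, hcard, him⟩
      exact ⟨pair_subset_triple hab hac hbc hsub hcard, him⟩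
    · rintro ⟨h | h | h, him⟩ <;> subst h
      · exact ⟨by intro x hx; simp at hx; rcases hx with rfl | rfl <;> simp,
          Finset.card_pair hab, him⟩
      · exact ⟨by intro x hx; simp at hx; rcases hx with rfl | rfl <;> simp,
          Finset.card_pair hac, him⟩
      · exact ⟨by intro x hx; simp at hx; rcases hx with rfl | rfl <;> simp,
          Finset.card_pair hbc, him⟩
  rw [hset]
  have hne1 : ({a, b} : Finset E) ≠ {a, c} := by
    intro h
    have : c ∈ ({a, b} : Finset E) := by rw [h]; simp
    simp only [Finset.mem_insert, Finset.mem_singleton] at this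
    rcases this with h' | h' <;> [exact hac h'.symm; exact hbc h'.symm]
  have hne2 : ({a, b} : Finset E) ≠ {b, c} := by
    intro h
    have : c ∈ ({a, b} : Finset E) := by rw [h]; simp
    simp only [Finset.mem_insert, Finset.mem_singleton] at this
    rcases this with h' | h' <;> [exact hac h'.symm; exact hbc h'.symm]
  have hne3 : ({a, c} : Finset E) ≠ {b, c} := by
    intro h
    have : b ∈ ({a, c} : Finset E) := by rw [h]; simp
    simp only [Finset.mem_insert, Finset.mem_singleton] at this
    rcases this with h' | h' <;> [exact hab h'.symm; exact hbc h']
  rw [Finset.filter_insert, Finset.filter_insert, Finset.filter_singleton]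
  have him1 : ({a, b} : Finset E).image ℓ = {ℓ a, ℓ b} := by
    rw [Finset.image_insert, Finset.image_singleton]
  have him2 : ({a, c} : Finset E).image ℓ = {ℓ a, ℓ c} := by
    rw [Finset.image_insert, Finset.image_singleton]
  have him3 : ({b, c} : Finset E).image ℓ = {ℓ b, ℓ c} := by
    rw [Finset.image_insert, Finset.image_singleton]
  rw [him1, him2, him3]
  by_cases h1 : ({ℓ a, ℓ b} : Finset (Fin 3)) = {0, 1} <;>
    by_cases h2 : ({ℓ a, ℓ c} : Finset (Fin 3)) = {0, 1} <;>
      by_cases h3 : ({ℓ b, ℓ c} : Finset (Fin 3)) = {0, 1} <;>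
        simp [h1, h2, h3, hne1, hne2, hne3, Finset.card_insert_of_notMem,
          Finset.mem_insert, Finset.mem_singleton]


lemma fin3_door_parity : ∀ la lb lc : Fin 3,
    ((if ({la, lb} : Finset (Fin 3)) = {0, 1} then 1 else 0) +
     (if ({la, lc} : Finset (Fin 3)) = {0, 1} then 1 else 0) +
     (if ({lb, lc} : Finset (Fin 3)) = {0, 1} then 1 else 0)) % 2 =
    if ({la, lb, lc} : Finset (Fin 3)) = Finset.univ then 1 else 0 := by decide

lemma doors_parity {σ : Finset E} (hσ : σ ∈ T.facets) :
    (doorsOf ℓ σ).card % 2 = if σ.image ℓ = Finset.univ then 1 else 0 := by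
  obtain ⟨a, b, c, hab, hac, hbc, hτ⟩ := exists_triple hσ
  subst hτ
  rw [doors_card_eq hab hac hbc]
  have himg : ({a, b, c} : Finset E).image ℓ = {ℓ a, ℓ b, ℓ c} := by
    rw [Finset.image_insert, Finset.image_insert, Finset.image_singleton]
  rw [himg]
  exact fin3_door_parity (ℓ a) (ℓ b) (ℓ c)

lemma mem_vertices {σ : Finset E} {v : E} (hσ : σ ∈ T.facets) (hv : v ∈ σ) :
    v ∈ T.vertices :=
  Finset.mem_biUnion.2 ⟨σ, hσ, hv⟩

lemma bottom_label (hℓ : IsSperner T ℓ) {v : E} (hv : v ∈ T.vertices) (h2 : v 2 = 0) :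
    ℓ v = 0 ∨ ℓ v = 1 := by
  rcases fin3_cases (ℓ v) with h | h | h
  · exact Or.inl h
  · exact Or.inr h
  · exfalso
    apply hℓ v hv
    rw [h, h2]

lemma door_label_split {x y : E}
    (h : ({ℓ x, ℓ y} : Finset (Fin 3)) = ({0, 1} : Finset (Fin 3))) :
    (ℓ x = 0 ∧ ℓ y = 1) ∨ (ℓ x = 1 ∧ ℓ y = 0) := by
  rcases fin3_cases (ℓ x) with h1 | h1 | h1 <;> rcases fin3_cases (ℓ y) with h2 | h2 | h2 <;>
    rw [h1, h2] at h <;>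
      first
        | (exact Or.inl ⟨h1, h2⟩)
        | (exact Or.inr ⟨h1, h2⟩)
        | (exfalso; revert h; decide)

noncomputable def allDoors (T : Triangulation 3) (ℓ : E → Fin 3) : Finset (Finset E) :=
  T.facets.biUnion (doorsOf ℓ)

lemma mem_allDoors {τ : Finset E} : τ ∈ allDoors T ℓ ↔
    (∃ σ ∈ T.facets, τ ⊆ σ) ∧ τ.card = 2 ∧ τ.image ℓ = ({0, 1} : Finset (Fin 3)) := by
  simp only [allDoors, Finset.mem_biUnion, mem_doorsOf]
  tauto

lemma door_count_parity (hℓ : IsSperner T ℓ) {τ : Finset E} (hτ : τ ∈ allDoors T ℓ) :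
    (T.facets.filter (fun σ => τ ⊆ σ)).card % 2 =
      if (∀ v ∈ τ, v 2 = 0) then 1 else 0 := by
  obtain ⟨⟨σ₀, hσ₀, hsub⟩, hcard, himg⟩ := mem_allDoors.1 hτ
  obtain ⟨x, y, hxy, rfl⟩ := Finset.card_eq_two.1 hcard
  have himg' : ({ℓ x, ℓ y} : Finset (Fin 3)) = {0, 1} := by
    rw [← Finset.image_singleton ℓ y, ← Finset.image_insert]
    exact himg
  have hxv : x ∈ T.vertices := mem_vertices hσ₀ (hsub (by simp))
  have hyv : y ∈ T.vertices := mem_vertices hσ₀ (hsub (by simp))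
  by_cases hb : ∀ v ∈ ({x, y} : Finset E), v 2 = 0
  · rw [if_pos hb]
    rw [count_boundary hσ₀ hxy hsub (hb x (by simp)) (hb y (by simp))]
  · rw [if_neg hb]
    have hint : ¬ ∃ i, x i = 0 ∧ y i = 0 := by
      rintro ⟨i, hxi, hyi⟩
      have hi2 : i = 2 := by
        rcases door_label_split himg' with ⟨h1, h2⟩ | ⟨h1, h2⟩
        · have h0 : x 0 ≠ 0 := by have := hℓ x hxv; rwa [h1] at this
          have h1' : y 1 ≠ 0 := by have := hℓ y hyv; rwa [h2] at this
          rcases fin3_cases i with rfl | rfl | rfl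
          · exact absurd hxi h0
          · exact absurd hyi h1'
          · rfl
        · have h0 : y 0 ≠ 0 := by have := hℓ y hyv; rwa [h2] at this
          have h1' : x 1 ≠ 0 := by have := hℓ x hxv; rwa [h1] at this
          rcases fin3_cases i with rfl | rfl | rfl
          · exact absurd hyi h0
          · exact absurd hxi h1'
          · rfl
      apply hb
      intro v hv
      rcases Finset.mem_insert.1 hv with rfl | hv
      · rw [← hi2]; exact hxi
      · rw [Finset.mem_singleton] at hv; subst hv
        rw [← hi2]; exact hyi
    rw [count_interior hσ₀ hxy hsub hint]

lemma edge_zero_parity (hℓ : IsSperner T ℓ) {τ : Finset E} (hτ : τ ∈ Bedges T) :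
    (τ.filter (fun v => ℓ v = 0)).card % 2 =
      if τ.image ℓ = ({0, 1} : Finset (Fin 3)) then 1 else 0 := by
  classical
  obtain ⟨⟨σ, hσ, hsub⟩, hc, hbot⟩ := mem_Bedges.1 hτ
  obtain ⟨x, y, hxy, rfl⟩ := Finset.card_eq_two.1 hc
  have hxv : x ∈ T.vertices := mem_vertices hσ (hsub (by simp))
  have hyv : y ∈ T.vertices := mem_vertices hσ (hsub (by simp))
  have hx01 := bottom_label hℓ hxv (hbot x (by simp))
  have hy01 := bottom_label hℓ hyv (hbot y (by simp))
  have himg : ({x, y} : Finset E).image ℓ = {ℓ x, ℓ y} := by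
    rw [Finset.image_insert, Finset.image_singleton]
  rw [himg, Finset.filter_insert, Finset.filter_singleton]
  have hyx : ¬ x ∈ ({y} : Finset E) := by simp [hxy]
  rcases hx01 with hx | hx <;> rcases hy01 with hy | hy <;> rw [hx, hy] <;>
    simp [Finset.card_insert_of_notMem, hyx] <;> decide

lemma bottom_door_odd (hℓ : IsSperner T ℓ) :
    ((Bedges T).filter (fun τ => τ.image ℓ = ({0, 1} : Finset (Fin 3)))).card % 2 = 1 := by
  classical
  set F : Finset E → Finset E := fun τ => τ.filter (fun v => ℓ v = 0) with hF
  have hdc := dc (Bedges T) F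
  set V₀ := (Bedges T).biUnion F with hV
  have hA : (∑ τ ∈ Bedges T, (F τ).card) % 2 =
      ((Bedges T).filter (fun τ => τ.image ℓ = ({0, 1} : Finset (Fin 3)))).card % 2 := by
    rw [Finset.sum_nat_mod]
    rw [Finset.sum_congr rfl (fun τ hτ => edge_zero_parity hℓ hτ)]
    rw [← Finset.card_filter]
  have hB : (∑ w ∈ V₀, ((Bedges T).filter (fun τ => w ∈ F τ)).card) % 2 = 1 := by
    rw [Finset.sum_nat_mod]
    have hper : ∀ w ∈ V₀, ((Bedges T).filter (fun τ => w ∈ F τ)).card % 2 =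
        if w = botpt 1 then 1 else 0 := by
      intro w hw
      obtain ⟨τ', hτ', hwF⟩ := Finset.mem_biUnion.1 hw
      have hw0 : ℓ w = 0 := (Finset.mem_filter.1 hwF).2
      have hwτ' : w ∈ τ' := (Finset.mem_filter.1 hwF).1
      have heqf : (Bedges T).filter (fun τ => w ∈ F τ) =
          (Bedges T).filter (fun τ => w ∈ τ) := by
        apply Finset.filter_congr
        intro τ _
        simp [hF, Finset.mem_filter, hw0]
      rw [heqf]
      have hwΔ := Bedge_vertex hτ' hwτ'
      obtain ⟨σ', hσ', hsub'⟩ := (mem_Bedges.1 hτ').1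
      have hwv : w ∈ T.vertices := mem_vertices hσ' (hsub' hwτ')
      have hw0pos : 0 < w 0 := by
        have hne := hℓ w hwv
        rw [hw0] at hne
        exact lt_of_le_of_ne ((mem_Δ_iff.1 hwΔ.1).1 0) (Ne.symm hne)
      rw [deg_count hτ' hwτ' hw0pos]
      by_cases hcase : w 0 = 1
      · rw [if_pos hcase, if_pos]
        apply bot_ext hwΔ.1 (botpt_mem zero_le_one le_rfl) hwΔ.2 (by simp [botpt])
        rw [hcase]; simp [botpt]
      · rw [if_neg hcase, if_neg]
        intro h
        apply hcase
        rw [h]; simp [botpt]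
    rw [Finset.sum_congr rfl hper, ← Finset.card_filter]
    have hone : V₀.filter (fun w => w = botpt 1) = {botpt 1} := by
      ext w
      simp only [Finset.mem_filter, Finset.mem_singleton]
      constructor
      · exact fun h => h.2
      · rintro rfl
        refine ⟨?_, rfl⟩
        obtain ⟨τ, hτ, hmem⟩ := e0_mem_edge (T := T)
        obtain ⟨σ', hσ', hsub'⟩ := (mem_Bedges.1 hτ).1
        have hv : botpt 1 ∈ T.vertices := mem_vertices hσ' (hsub' hmem)
        have hlab : ℓ (botpt 1) = 0 := by
          have hne := hℓ _ hv
          rcases fin3_cases (ℓ (botpt 1)) with h | h | h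
          · exact h
          · exfalso; apply hne; rw [h]; simp [botpt]
          · exfalso; apply hne; rw [h]; simp [botpt]
        rw [hV]
        exact Finset.mem_biUnion.2 ⟨τ, hτ, Finset.mem_filter.2 ⟨hmem, hlab⟩⟩
    rw [hone]
    simp
  rw [← hA, hdc, hB]

end S

/-- Strong Sperner's lemma for the triangle: the number of small triangles
exhibiting all three labels is odd. -/
theorem sperner_triangle_odd (T : Triangulation 3) (ℓ : (Fin 3 → ℝ) → Fin 3)
    (hℓ : IsSperner T ℓ) :
    Odd ((T.facets.filter
      (fun σ => σ.image ℓ = (Finset.univ : Finset (Fin 3)))).card) := by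
  classical
  rw [Nat.odd_iff]
  have h1 : (T.facets.filter
      (fun σ => σ.image ℓ = (Finset.univ : Finset (Fin 3)))).card % 2 =
      (∑ σ ∈ T.facets, (S.doorsOf ℓ σ).card) % 2 := by
    rw [Finset.card_filter]
    rw [Finset.sum_nat_mod T.facets 2 (fun σ => (S.doorsOf ℓ σ).card)]
    rw [Finset.sum_congr rfl (fun σ hσ => (S.doors_parity (ℓ := ℓ) hσ).symm)]
  have h2 : ∑ σ ∈ T.facets, (S.doorsOf ℓ σ).card =
      ∑ τ ∈ S.allDoors T ℓ, (T.facets.filter (fun σ => τ ⊆ σ)).card := by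
    rw [S.dc T.facets (S.doorsOf ℓ)]
    apply Finset.sum_congr rfl
    intro τ hτ
    have hτ' : τ ∈ S.allDoors T ℓ := hτ
    obtain ⟨_, hc, him⟩ := S.mem_allDoors.1 hτ'
    congr 1
    apply Finset.filter_congr
    intro σ _
    simp only [S.mem_doorsOf]
    constructor
    · rintro ⟨hsub, _, _⟩; exact hsub
    · intro hsub; exact ⟨hsub, hc, him⟩
  have h3 : (∑ τ ∈ S.allDoors T ℓ, (T.facets.filter (fun σ => τ ⊆ σ)).card) % 2 =
      ((S.allDoors T ℓ).filter (fun τ => ∀ v ∈ τ, v 2 = 0)).card % 2 := by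
    rw [Finset.sum_nat_mod]
    rw [Finset.sum_congr rfl (fun τ hτ => S.door_count_parity hℓ hτ)]
    rw [← Finset.card_filter]
  have h4 : (S.allDoors T ℓ).filter (fun τ => ∀ v ∈ τ, v 2 = 0) =
      (S.Bedges T).filter (fun τ => τ.image ℓ = ({0, 1} : Finset (Fin 3))) := by
    ext τ
    simp only [Finset.mem_filter, S.mem_allDoors, S.mem_Bedges]
    constructor
    · rintro ⟨⟨hex, hc, him⟩, hbot⟩; exact ⟨⟨hex, hc, hbot⟩, him⟩
    · rintro ⟨⟨hex, hc, hbot⟩, him⟩; exact ⟨⟨hex, hc, him⟩, hbot⟩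
  rw [h1, h2, h3, h4, S.bottom_door_odd hℓ]
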